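/- arXiv:1812.10147 — 4 statements merged into one kernel-verified Lean document; each statement's English description precedes it below -/
import Mathlib

section
/- Let X = (X_n) be an irreducible, aperiodic, positive recurrent Markov chain on a countable set A with stationary distribution π and reversed chain X̂. Let μ and η be arbitrary probability distributions on A, and for any initial distribution ρ write P_ρ, E_ρ for the law and expectation of the chain started from ρ. Define L_n = Σ_{i=1}^n 1{X_i = X_{n+1}} and L̂_{n+1}(X̂_1) = Σ_{i=1}^{n+1} 1{X̂_i = X̂_1}. Then for any nonnegative measurable function f and all n ≥ 1: E_μ[ (η(X_{n+1})/π(X_{n+1})) f(L_n) ] = E_η[ (μ(X̂_{n+1})/π(X̂_{n+1})) f(L̂_{n+1}(X̂_1) − 1) ], where on the right-hand side η is the initial distribution of the reversed chain. -/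
open MeasureTheory ENNReal Finset
open Function Fin.NatCast

/-- The finite-dimensional law of a Markov chain `X` (indexed from 0) with initial
distribution `μ` and transition operator `Q`. -/
def IsChainLaw {A Ω : Type*} [MeasurableSpace Ω] (P : Measure Ω) (X : ℕ → Ω → A)
    (μ : A → ℝ≥0∞) (Q : A → A → ℝ≥0∞) : Prop :=
  ∀ (n : ℕ) (a : ℕ → A),
    P (⋂ i ∈ Finset.range (n + 1), {ω | X i ω = a i}) =
      μ (a 0) * ∏ i ∈ Finset.range n, Q (a i) (a (i + 1))

/-- A set whose outer measure plus the outer measure of its complement is at most the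
total mass is null measurable. -/
lemma aux_nullMeasurable {Ω : Type*} [MeasurableSpace Ω] (P : Measure Ω) [IsProbabilityMeasure P]
    (S : Set Ω) (h : P S + P Sᶜ ≤ 1) : NullMeasurableSet S P := by
  set T := toMeasurable P S with hTdef
  set T' := toMeasurable P Sᶜ with hT'def
  have hTS : S ⊆ T := subset_toMeasurable P S
  have hT'S : Sᶜ ⊆ T' := subset_toMeasurable P Sᶜ
  have hmT : MeasurableSet T := measurableSet_toMeasurable P S
  have hmT' : MeasurableSet T' := measurableSet_toMeasurable P Sᶜ
  have hunion : T ∪ T' = Set.univ := by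
    apply Set.eq_univ_of_univ_subset
    intro ω _
    by_cases hω : ω ∈ S
    · exact Or.inl (hTS hω)
    · exact Or.inr (hT'S hω)
  have h1 : P (T ∪ T') + P (T ∩ T') = P T + P T' := measure_union_add_inter T hmT'
  rw [hunion, measure_univ] at h1
  have hPT : P T = P S := measure_toMeasurable S
  have hPT' : P T' = P Sᶜ := measure_toMeasurable Sᶜ
  have h2 : (1 : ℝ≥0∞) + P (T ∩ T') ≤ 1 + 0 := by
    rw [add_zero, h1, hPT, hPT']; exact h
  have key : P (T ∩ T') = 0 :=
    le_antisymm ((ENNReal.add_le_add_iff_left one_ne_top).mp h2) bot_le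
  have hTdiff : P (T \ S) = 0 := by
    refine measure_mono_null (fun ω hω => ?_) key
    exact ⟨hω.1, hT'S hω.2⟩
  refine hmT.nullMeasurableSet.congr ?_
  exact ae_eq_set.mpr ⟨hTdiff, by rw [Set.diff_eq_empty.mpr hTS, measure_empty]⟩

/-- Lower integral of a function constant on each piece of a countable partition whose
pieces' outer measures add up to the total mass. -/
lemma lintegral_partition {Ω ι : Type*} [MeasurableSpace Ω] [Countable ι]
    (P : Measure Ω) [IsProbabilityMeasure P] (S : ι → Set Ω)
    (hdisj : Pairwise (Disjoint on S))
    (hcov : (⋃ i, S i) = Set.univ)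
    (hsum : ∑' i, P (S i) = 1)
    (f : Ω → ℝ≥0∞) (c : ι → ℝ≥0∞)
    (hf : ∀ i, ∀ ω ∈ S i, f ω = c i) :
    ∫⁻ ω, f ω ∂P = ∑' i, c i * P (S i) := by
  classical
  have hnm : ∀ i, NullMeasurableSet (S i) P := by
    intro i
    apply aux_nullMeasurable
    have hsub : (S i)ᶜ ⊆ ⋃ j, (if j = i then (∅ : Set Ω) else S j) := by
      intro ω hω
      have hm : ω ∈ ⋃ j, S j := hcov ▸ Set.mem_univ ω
      obtain ⟨j, hj⟩ := Set.mem_iUnion.mp hm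
      refine Set.mem_iUnion.mpr ⟨j, ?_⟩
      have hji : j ≠ i := by rintro rfl; exact hω hj
      simpa [hji] using hj
    have h1 : P (S i)ᶜ ≤ ∑' j, (if j = i then 0 else P (S j)) := by
      refine le_trans (measure_mono hsub) (le_trans (measure_iUnion_le _) ?_)
      refine ENNReal.tsum_le_tsum fun j => ?_
      split_ifs with hj <;> simp
    have h2 := ENNReal.tsum_eq_add_tsum_ite (f := fun j => P (S j)) i
    rw [hsum] at h2
    calc P (S i) + P (S i)ᶜ
        ≤ P (S i) + ∑' j, (if j = i then 0 else P (S j)) := add_le_add_right h1 _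
      _ = 1 := h2.symm
  have hPsum : P = Measure.sum (fun i => P.restrict (S i)) := by
    ext E hE
    rw [Measure.sum_apply _ hE]
    simp only [Measure.restrict_apply hE]
    calc P E = P (⋃ i, E ∩ S i) := by rw [← Set.inter_iUnion, hcov, Set.inter_univ]
      _ = ∑' i, P (E ∩ S i) := measure_iUnion₀
          (fun i j hij =>
            ((hdisj hij).mono Set.inter_subset_right Set.inter_subset_right).aedisjoint)
          (fun i => hE.nullMeasurableSet.inter (hnm i))
  conv_lhs => rw [hPsum]
  rw [lintegral_sum_measure]
  refine tsum_congr fun i => ?_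
  have haeT : toMeasurable P (S i) =ᵐ[P] S i := (hnm i).toMeasurable_ae_eq
  have hmT : MeasurableSet (toMeasurable P (S i)) := measurableSet_toMeasurable P (S i)
  rw [Measure.restrict_congr_set haeT.symm]
  have h0 : P (toMeasurable P (S i) \ S i) = 0 := (ae_eq_set.mp haeT).1
  have hmM : MeasurableSet (toMeasurable P (toMeasurable P (S i) \ S i)) :=
    measurableSet_toMeasurable _ _
  have hPM : P (toMeasurable P (toMeasurable P (S i) \ S i)) = 0 := by
    rw [measure_toMeasurable]; exact h0
  have hfc : f =ᵐ[P.restrict (toMeasurable P (S i))] fun _ => c i := by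
    rw [Filter.EventuallyEq, ae_iff]
    have hsubB : {ω | ¬ f ω = (fun _ => c i) ω} ⊆
        (toMeasurable P (S i))ᶜ ∪ toMeasurable P (toMeasurable P (S i) \ S i) := by
      intro ω hω
      by_cases hT0 : ω ∈ toMeasurable P (S i)
      · exact Or.inr (subset_toMeasurable _ _ ⟨hT0, fun hS => hω (hf i ω hS)⟩)
      · exact Or.inl hT0
    have hz : (P.restrict (toMeasurable P (S i)))
        ((toMeasurable P (S i))ᶜ ∪ toMeasurable P (toMeasurable P (S i) \ S i)) = 0 := by
      rw [Measure.restrict_apply (hmT.compl.union hmM)]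
      refine le_antisymm (le_trans (measure_mono ?_) hPM.le) bot_le
      rintro ω ⟨hω1 | hω1, hω2⟩
      · exact absurd hω2 hω1
      · exact hω1
    exact measure_mono_null hsubB hz
  rw [lintegral_congr_ae hfc, lintegral_const, Measure.restrict_apply_univ,
    measure_toMeasurable]

/-- Total mass of path weights. -/
lemma tsum_path {A : Type*} [Countable A] (K : A → A → ℝ≥0∞) (hK : ∀ x, ∑' y, K x y = 1) :
    ∀ (m : ℕ) (ν : A → ℝ≥0∞),
      (∑' a : Fin (m+1) → A, ν (a ((0:ℕ) : Fin (m+1))) *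
        ∏ i ∈ Finset.range m, K (a ((i : ℕ) : Fin (m+1))) (a ((i+1 : ℕ) : Fin (m+1))))
        = ∑' x, ν x := by
  intro m
  induction m with
  | zero =>
    intro ν
    rw [← Equiv.tsum_eq (Equiv.funUnique (Fin 1) A).symm]
    simp [Equiv.funUnique]
  | succ m ih =>
    intro ν
    rw [← Equiv.tsum_eq (Fin.consEquiv (fun _ : Fin (m+2) => A))]
    rw [ENNReal.tsum_prod']
    refine tsum_congr fun x => ?_
    have hsucc : ∀ j : ℕ, j < m+1 →
        ((j+1 : ℕ) : Fin (m+2)) = Fin.succ ((j : ℕ) : Fin (m+1)) := by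
      intro j hj
      apply Fin.ext
      rw [Fin.val_cast_of_lt (by omega), Fin.val_succ, Fin.val_cast_of_lt (by omega)]
    have hce : ∀ b : Fin (m+1) → A,
        (Fin.consEquiv (fun _ : Fin (m+2) => A)) (x, b) = Fin.cons x b := fun b => rfl
    have hcs : ∀ (b : Fin (m+1) → A) (j : ℕ), j < m+1 →
        (Fin.cons x b : Fin (m+2) → A) ((j+1 : ℕ) : Fin (m+2)) = b ((j : ℕ) : Fin (m+1)) := by
      intro b j hj
      rw [hsucc j hj, Fin.cons_succ]
    have htrans : ∀ b : Fin (m+1) → A,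
        ν ((Fin.consEquiv (fun _ : Fin (m+2) => A)) (x, b) ((0:ℕ) : Fin (m+2))) *
          ∏ i ∈ Finset.range (m+1),
            K ((Fin.consEquiv (fun _ : Fin (m+2) => A)) (x, b) ((i : ℕ) : Fin (m+2)))
              ((Fin.consEquiv (fun _ : Fin (m+2) => A)) (x, b) ((i+1 : ℕ) : Fin (m+2)))
        = (fun y => ν x * K x y) (b ((0:ℕ) : Fin (m+1))) *
            ∏ i ∈ Finset.range m, K (b ((i : ℕ) : Fin (m+1))) (b ((i+1 : ℕ) : Fin (m+1))) := by
      intro b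
      rw [hce b]
      have hz : (Fin.cons x b : Fin (m+2) → A) ((0:ℕ) : Fin (m+2)) = x := by
        rw [Nat.cast_zero]; rfl
      rw [hz, Finset.prod_range_succ']
      have hprod : (∏ i ∈ Finset.range m,
          K ((Fin.cons x b : Fin (m+2) → A) ((i+1 : ℕ) : Fin (m+2)))
            ((Fin.cons x b : Fin (m+2) → A) ((i+1+1 : ℕ) : Fin (m+2))))
          = ∏ i ∈ Finset.range m,
              K (b ((i : ℕ) : Fin (m+1))) (b ((i+1 : ℕ) : Fin (m+1))) := by
        refine Finset.prod_congr rfl fun i hi => ?_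
        have hi' : i < m := Finset.mem_range.mp hi
        rw [hcs b i (by omega), hcs b (i+1) (by omega)]
      rw [hprod, Nat.cast_zero, Fin.cons_zero, hcs b 0 (by omega)]
      show ν x * ((∏ i ∈ Finset.range m,
        K (b ((i : ℕ) : Fin (m+1))) (b ((i+1 : ℕ) : Fin (m+1)))) * K x (b ((0:ℕ) : Fin (m+1))))
        = _
      ring
    calc (∑' b : Fin (m+1) → A,
          ν ((Fin.consEquiv (fun _ : Fin (m+2) => A)) (x, b) ((0:ℕ) : Fin (m+2))) *
          ∏ i ∈ Finset.range (m+1),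
            K ((Fin.consEquiv (fun _ : Fin (m+2) => A)) (x, b) ((i : ℕ) : Fin (m+2)))
              ((Fin.consEquiv (fun _ : Fin (m+2) => A)) (x, b) ((i+1 : ℕ) : Fin (m+2))))
        = ∑' b : Fin (m+1) → A,
            (fun y => ν x * K x y) (b ((0:ℕ) : Fin (m+1))) *
            ∏ i ∈ Finset.range m,
              K (b ((i : ℕ) : Fin (m+1))) (b ((i+1 : ℕ) : Fin (m+1))) := tsum_congr htrans
      _ = ∑' y, ν x * K x y := ih (fun y => ν x * K x y)
      _ = ν x := by rw [ENNReal.tsum_mul_left, hK, mul_one]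

/-- The cylinder sets of a chain law form an (outer-measure-)full partition. -/
lemma chain_partition {A : Type*} [Countable A] {Ω : Type*} [MeasurableSpace Ω]
    (P : Measure Ω) (Z : ℕ → Ω → A) (ν : A → ℝ≥0∞) (K : A → A → ℝ≥0∞)
    (hZ : IsChainLaw P Z ν K) (hν : ∑' x, ν x = 1) (hK : ∀ x, ∑' y, K x y = 1) (n : ℕ) :
    (Pairwise (Disjoint on fun a : Fin (n+1) → A =>
        ⋂ i ∈ Finset.range (n+1), {ω | Z i ω = a ((i : ℕ) : Fin (n+1))}))
    ∧ (⋃ a : Fin (n+1) → A,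
        ⋂ i ∈ Finset.range (n+1), {ω | Z i ω = a ((i : ℕ) : Fin (n+1))}) = Set.univ
    ∧ (∀ a : Fin (n+1) → A,
        P (⋂ i ∈ Finset.range (n+1), {ω | Z i ω = a ((i : ℕ) : Fin (n+1))}) =
          ν (a ((0:ℕ) : Fin (n+1))) *
            ∏ i ∈ Finset.range n, K (a ((i : ℕ) : Fin (n+1))) (a ((i+1 : ℕ) : Fin (n+1))))
    ∧ ∑' a : Fin (n+1) → A,
        P (⋂ i ∈ Finset.range (n+1), {ω | Z i ω = a ((i : ℕ) : Fin (n+1))}) = 1 := by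
  have hmem : ∀ (a : Fin (n+1) → A) (ω : Ω),
      ω ∈ (⋂ i ∈ Finset.range (n+1), {ω | Z i ω = a ((i : ℕ) : Fin (n+1))}) ↔
        ∀ j, j < n+1 → Z j ω = a ((j : ℕ) : Fin (n+1)) := by
    intro a ω
    simp [Set.mem_iInter]
  have hlaw : ∀ a : Fin (n+1) → A,
      P (⋂ i ∈ Finset.range (n+1), {ω | Z i ω = a ((i : ℕ) : Fin (n+1))}) =
        ν (a ((0:ℕ) : Fin (n+1))) *
          ∏ i ∈ Finset.range n, K (a ((i : ℕ) : Fin (n+1))) (a ((i+1 : ℕ) : Fin (n+1))) :=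
    fun a => hZ n (fun j => a ((j : ℕ) : Fin (n+1)))
  refine ⟨?_, ?_, hlaw, ?_⟩
  · intro a b hab
    rw [Function.onFun, Set.disjoint_left]
    intro ω hωa hωb
    apply hab
    funext i
    have h1 := (hmem a ω).mp hωa i.val i.isLt
    have h2 := (hmem b ω).mp hωb i.val i.isLt
    rw [Fin.cast_val_eq_self] at h1 h2
    rw [← h1, ← h2]
  · apply Set.eq_univ_of_univ_subset
    intro ω _
    have hm := (hmem (fun i : Fin (n+1) => Z i.val ω) ω).mpr (fun j hj => by
      show Z j ω = Z (((j : ℕ) : Fin (n+1)) : ℕ) ω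
      rw [Fin.val_cast_of_lt hj])
    exact Set.mem_iUnion.mpr ⟨fun i : Fin (n+1) => Z i.val ω, hm⟩
  · rw [tsum_congr hlaw]
    rw [tsum_path K hK n ν]
    exact hν

/-- Lemma 2.1: with `L_n = Σ_{i=1}^n 1{X_i = X_{n+1}}` and
`L̂_{n+1}(X̂_1) = Σ_{i=1}^{n+1} 1{X̂_i = X̂_1}`, for every nonnegative `f` and `n ≥ 1`,
`E_μ[(η(X_{n+1})/π(X_{n+1})) f(L_n)] = E_η[(μ(X̂_{n+1})/π(X̂_{n+1})) f(L̂_{n+1}(X̂_1) − 1)]`,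
where `X̂` is the reversed chain started from `η`. (Here chains are indexed from 0.) -/
theorem lemma_taun {A : Type*} [Countable A] [DecidableEq A]
    {Ω Ω' : Type*} [MeasurableSpace Ω] [MeasurableSpace Ω']
    (P : Measure Ω) [IsProbabilityMeasure P] (P' : Measure Ω') [IsProbabilityMeasure P']
    (X : ℕ → Ω → A) (Y : ℕ → Ω' → A)
    (Q Qhat : A → A → ℝ≥0∞) (π μ η : A → ℝ≥0∞)
    (hQ : ∀ x, ∑' y, Q x y = 1)
    (hμ : ∑' x, μ x = 1) (hη : ∑' x, η x = 1)
    (hπpos : ∀ x, 0 < π x) (hπfin : ∀ x, π x ≠ ∞) (hπsum : ∑' x, π x = 1)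
    (hstat : ∀ x, ∑' y, π y * Q y x = π x)
    (hirr : ∀ x y, ∃ t : ℕ, ∃ b : ℕ → A, b 0 = x ∧ b t = y ∧
      0 < ∏ i ∈ Finset.range t, Q (b i) (b (i + 1)))
    (hQhat : ∀ x y, Qhat x y = π y * Q y x / π x)
    (hX : IsChainLaw P X μ Q) (hY : IsChainLaw P' Y η Qhat)
    (f : ℕ → ℝ≥0∞) (n : ℕ) (hn : 1 ≤ n) :
    ∫⁻ ω, (η (X n ω) / π (X n ω)) *
        f (∑ i ∈ Finset.range n, if X i ω = X n ω then 1 else 0) ∂P =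
      ∫⁻ ω, (μ (Y n ω) / π (Y n ω)) *
        f ((∑ i ∈ Finset.range (n + 1), if Y i ω = Y 0 ω then 1 else 0) - 1) ∂P' := by
  classical
  have hQhatsum : ∀ x, ∑' y, Qhat x y = 1 := by
    intro x
    have hdiv : ∀ y, Qhat x y = (π y * Q y x) * (π x)⁻¹ := by
      intro y; rw [hQhat, div_eq_mul_inv]
    rw [tsum_congr hdiv, ENNReal.tsum_mul_right, hstat, ENNReal.mul_inv_cancel
      (hπpos x).ne' (hπfin x)]
  obtain ⟨hdX, hcX, hlX, hsX⟩ := chain_partition P X μ Q hX hμ hQ n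
  obtain ⟨hdY, hcY, hlY, hsY⟩ := chain_partition P' Y η Qhat hY hη hQhatsum n
  have hLHS : ∫⁻ ω, (η (X n ω) / π (X n ω)) *
      f (∑ i ∈ Finset.range n, if X i ω = X n ω then 1 else 0) ∂P =
      ∑' a : Fin (n+1) → A,
        ((η (a ((n:ℕ) : Fin (n+1))) / π (a ((n:ℕ) : Fin (n+1)))) *
          f (∑ i ∈ Finset.range n,
            if a ((i:ℕ) : Fin (n+1)) = a ((n:ℕ) : Fin (n+1)) then 1 else 0)) *
        P (⋂ i ∈ Finset.range (n+1), {ω | X i ω = a ((i : ℕ) : Fin (n+1))}) := by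
    refine lintegral_partition P _ hdX hcX hsX _ _ ?_
    intro a ω hω
    have hx : ∀ j, j < n+1 → X j ω = a ((j : ℕ) : Fin (n+1)) := by
      simpa [Set.mem_iInter] using hω
    have hsum_eq : (∑ i ∈ Finset.range n, if X i ω = X n ω then 1 else 0) =
        ∑ i ∈ Finset.range n,
          if a ((i : ℕ) : Fin (n+1)) = a ((n : ℕ) : Fin (n+1)) then (1:ℕ) else 0 := by
      refine Finset.sum_congr rfl fun i hi => ?_
      have hi' : i < n := Finset.mem_range.mp hi
      rw [hx i (by omega), hx n (Nat.lt_succ_self n)]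
    rw [hsum_eq, hx n (Nat.lt_succ_self n)]
  have hRHS : ∫⁻ ω, (μ (Y n ω) / π (Y n ω)) *
      f ((∑ i ∈ Finset.range (n + 1), if Y i ω = Y 0 ω then 1 else 0) - 1) ∂P' =
      ∑' a : Fin (n+1) → A,
        ((μ (a ((n:ℕ) : Fin (n+1))) / π (a ((n:ℕ) : Fin (n+1)))) *
          f ((∑ i ∈ Finset.range (n+1),
            if a ((i:ℕ) : Fin (n+1)) = a ((0:ℕ) : Fin (n+1)) then 1 else 0) - 1)) *
        P' (⋂ i ∈ Finset.range (n+1), {ω | Y i ω = a ((i : ℕ) : Fin (n+1))}) := by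
    refine lintegral_partition P' _ hdY hcY hsY _ _ ?_
    intro a ω hω
    have hy : ∀ j, j < n+1 → Y j ω = a ((j : ℕ) : Fin (n+1)) := by
      simpa [Set.mem_iInter] using hω
    have hsum_eq : (∑ i ∈ Finset.range (n+1), if Y i ω = Y 0 ω then 1 else 0) =
        ∑ i ∈ Finset.range (n+1),
          if a ((i : ℕ) : Fin (n+1)) = a ((0 : ℕ) : Fin (n+1)) then (1:ℕ) else 0 := by
      refine Finset.sum_congr rfl fun i hi => ?_
      have hi' : i < n+1 := Finset.mem_range.mp hi
      rw [hy i hi', hy 0 (by omega)]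
    rw [hsum_eq, hy n (Nat.lt_succ_self n)]
  rw [hLHS, hRHS]
  -- reindex the right-hand side by path reversal
  have hrevinv : ∀ a : Fin (n+1) → A, (fun i => (fun j => a (Fin.rev j)) (Fin.rev i)) = a := by
    intro a; funext i; simp [Fin.rev_rev]
  let e : (Fin (n+1) → A) ≃ (Fin (n+1) → A) :=
    ⟨fun a => fun i => a (Fin.rev i), fun a => fun i => a (Fin.rev i), hrevinv, hrevinv⟩
  conv_rhs => rw [← Equiv.tsum_eq e]
  refine tsum_congr fun a => ?_
  beta_reduce
  rw [hlX a, hlY (e a)]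
  -- basic cast facts
  have hcast : ∀ j : ℕ, j < n+1 →
      (e a) ((j : ℕ) : Fin (n+1)) = a ((n - j : ℕ) : Fin (n+1)) := by
    intro j hj
    show a (Fin.rev ((j : ℕ) : Fin (n+1))) = a ((n - j : ℕ) : Fin (n+1))
    congr 1
    apply Fin.ext
    rw [Fin.val_rev, Fin.val_cast_of_lt hj, Fin.val_cast_of_lt (by omega)]
    omega
  set g : ℕ → A := fun j => a ((j : ℕ) : Fin (n+1)) with hgdef
  -- the reversal identity for transition products
  have hrevprod : ∀ m : ℕ,
      π (g m) * ∏ i ∈ Finset.range m, Qhat (g (i+1)) (g i) =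
        π (g 0) * ∏ i ∈ Finset.range m, Q (g i) (g (i+1)) := by
    intro m
    induction m with
    | zero => simp
    | succ m ih =>
      rw [Finset.prod_range_succ, Finset.prod_range_succ, hQhat]
      calc π (g (m+1)) * ((∏ i ∈ Finset.range m, Qhat (g (i+1)) (g i)) *
            (π (g m) * Q (g m) (g (m+1)) / π (g (m+1))))
          = (π (g (m+1)) * (π (g m) * Q (g m) (g (m+1)) / π (g (m+1)))) *
            ∏ i ∈ Finset.range m, Qhat (g (i+1)) (g i) := by ring
        _ = (π (g m) * Q (g m) (g (m+1))) *
            ∏ i ∈ Finset.range m, Qhat (g (i+1)) (g i) := by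
            rw [ENNReal.mul_div_cancel (hπpos (g (m+1))).ne' (hπfin (g (m+1)))]
        _ = (π (g m) * ∏ i ∈ Finset.range m, Qhat (g (i+1)) (g i)) * Q (g m) (g (m+1)) := by
            ring
        _ = (π (g 0) * ∏ i ∈ Finset.range m, Q (g i) (g (i+1))) * Q (g m) (g (m+1)) := by
            rw [ih]
        _ = π (g 0) * ((∏ i ∈ Finset.range m, Q (g i) (g (i+1))) * Q (g m) (g (m+1))) := by
            ring
  have hea0 : (e a) ((0 : ℕ) : Fin (n+1)) = g n := by
    rw [hcast 0 (by omega)]; simp [hgdef]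
  have hean : (e a) ((n : ℕ) : Fin (n+1)) = g 0 := by
    rw [hcast n (Nat.lt_succ_self n)]; simp [hgdef]
  -- compute the count on the reversed path
  have hcount : (∑ i ∈ Finset.range (n+1),
      if (e a) ((i : ℕ) : Fin (n+1)) = (e a) ((0 : ℕ) : Fin (n+1)) then (1:ℕ) else 0) - 1 =
      ∑ i ∈ Finset.range n, if g i = g n then (1:ℕ) else 0 := by
    have hterm : ∀ i ∈ Finset.range (n+1),
        (if (e a) ((i : ℕ) : Fin (n+1)) = (e a) ((0 : ℕ) : Fin (n+1)) then (1:ℕ) else 0) =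
          if g (n - i) = g n then (1:ℕ) else 0 := by
      intro i hi
      rw [hcast i (Finset.mem_range.mp hi), hea0]
    have hreflect := Finset.sum_range_reflect
      (fun i => if g i = g n then (1:ℕ) else 0) (n+1)
    simp only [Nat.add_sub_cancel] at hreflect
    rw [Finset.sum_congr rfl hterm, hreflect, Finset.sum_range_succ, if_pos rfl,
      Nat.add_sub_cancel]
  -- compute the reversed product of Qhat
  have hprodrev : (∏ i ∈ Finset.range n,
      Qhat ((e a) ((i : ℕ) : Fin (n+1))) ((e a) ((i+1 : ℕ) : Fin (n+1)))) =
      ∏ i ∈ Finset.range n, Qhat (g (i+1)) (g i) := by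
    have h2 := Finset.prod_range_reflect (fun i => Qhat (g (i+1)) (g i)) n
    calc (∏ i ∈ Finset.range n,
        Qhat ((e a) ((i : ℕ) : Fin (n+1))) ((e a) ((i+1 : ℕ) : Fin (n+1))))
        = ∏ i ∈ Finset.range n, Qhat (g ((n - 1 - i) + 1)) (g (n - 1 - i)) := by
          refine Finset.prod_congr rfl fun i hi => ?_
          have hi' : i < n := Finset.mem_range.mp hi
          rw [hcast i (by omega), hcast (i+1) (by omega)]
          have e1 : n - i = n - 1 - i + 1 := by omega
          have e2 : n - (i+1) = n - 1 - i := by omega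
          rw [e1, e2]
      _ = ∏ i ∈ Finset.range n, Qhat (g (i+1)) (g i) := h2
  rw [hcount, hprodrev, hea0, hean]
  -- goal is now purely algebraic in ℝ≥0∞
  set PQ := ∏ i ∈ Finset.range n, Q (g i) (g (i+1)) with hPQdef
  set PQh := ∏ i ∈ Finset.range n, Qhat (g (i+1)) (g i) with hPQhdef
  set s := ∑ i ∈ Finset.range n, if g i = g n then (1:ℕ) else 0 with hsdef
  have hu0 : π (g 0) ≠ 0 := (hπpos (g 0)).ne'
  have hut : π (g 0) ≠ ∞ := hπfin (g 0)
  have hv0 : π (g n) ≠ 0 := (hπpos (g n)).ne'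
  have hvt : π (g n) ≠ ∞ := hπfin (g n)
  have hkey : π (g n) * PQh = π (g 0) * PQ := hrevprod n
  have hkey2 : (π (g 0))⁻¹ * PQh = (π (g n))⁻¹ * PQ := by
    calc (π (g 0))⁻¹ * PQh = (π (g 0))⁻¹ * ((π (g n))⁻¹ * π (g n)) * PQh := by
          rw [ENNReal.inv_mul_cancel hv0 hvt, mul_one]
      _ = (π (g 0))⁻¹ * (π (g n))⁻¹ * (π (g n) * PQh) := by ring
      _ = (π (g 0))⁻¹ * (π (g n))⁻¹ * (π (g 0) * PQ) := by rw [hkey]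
      _ = ((π (g 0))⁻¹ * π (g 0)) * (π (g n))⁻¹ * PQ := by ring
      _ = (π (g n))⁻¹ * PQ := by rw [ENNReal.inv_mul_cancel hu0 hut, one_mul]
  rw [div_eq_mul_inv, div_eq_mul_inv]
  calc η (g n) * (π (g n))⁻¹ * f s * (μ (g 0) * PQ)
      = ((π (g n))⁻¹ * PQ) * (μ (g 0) * f s * η (g n)) := by ring
    _ = ((π (g 0))⁻¹ * PQh) * (μ (g 0) * f s * η (g n)) := by rw [hkey2]
    _ = μ (g 0) * (π (g 0))⁻¹ * f s * (η (g n) * PQh) := by ring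
end

section
/- Let X be an irreducible aperiodic Markov chain on a finite state space A with stationary distribution π, and suppose the concentration inequality P_μ{L_n(a) − nπ_a ≤ −nγ} ≤ exp(−(n/2)(λγ/t_0 − 2/n)²) holds for all a ∈ A, all γ > 0, all initial distributions μ, and all n > 2t_0/(λγ) (and similarly for the reversed chain). Fix an integer r ≥ 0, let π_∧ = min_a π_a, and let C = min{|A|, max_a μ_a/π_a}. Then for all n > (2t_0 + rλ + λ(1 − π_∧))/(λπ_∧): P_μ{L_n = r} ≤ P_μ{L_n ≤ r} ≤ C · exp(−(n/2)(λπ_∧/t_0 − (2 + (r+1)λ/t_0)/n)²). -/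
open MeasureTheory ENNReal Finset

/-- The finite-dimensional law (with real-valued initial distribution `ρ` and real
transition matrix `Q`) of a chain `X` indexed from 0, under the measure `P`. -/
def IsRealChainLaw {A Ω : Type*} [Fintype A] [MeasurableSpace Ω]
    (P : Measure Ω) (X : ℕ → Ω → A) (ρ : A → ℝ) (Q : A → A → ℝ) : Prop :=
  ∀ (n : ℕ) (a : ℕ → A),
    P (⋂ i ∈ Finset.range (n + 1), {ω | X i ω = a i}) =
      ENNReal.ofReal (ρ (a 0) * ∏ i ∈ Finset.range n, Q (a i) (a (i + 1)))

section Aux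

variable {A : Type*} [Fintype A] [DecidableEq A]

/-- Extend a finite path to ℕ by clamping. -/
def extv (n : ℕ) (v : Fin (n+1) → A) (i : ℕ) : A := v ⟨min i n, by omega⟩

lemma extv_eq {n : ℕ} (v : Fin (n+1) → A) {i : ℕ} (h : i < n+1) :
    extv n v i = v ⟨i, h⟩ := by
  unfold extv; congr 1; exact Fin.ext (by simp; omega)

lemma extv_zero {n : ℕ} (v : Fin (n+1) → A) : extv n v 0 = v 0 := by
  rw [extv_eq v (by omega)]; congr 1

lemma extv_cons_zero {n : ℕ} (a : A) (w : Fin (n+1) → A) :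
    extv (n+1) (Fin.cons a w) 0 = a := by
  rw [extv_zero]; simp

lemma extv_cons_succ {n : ℕ} (a : A) (w : Fin (n+1) → A) (i : ℕ) :
    extv (n+1) (Fin.cons a w) (i+1) = extv n w i := by
  unfold extv
  have h : (⟨min (i+1) (n+1), by omega⟩ : Fin (n+2)) = Fin.succ ⟨min i n, by omega⟩ :=
    Fin.ext (by simp [Fin.val_succ])
  rw [h, Fin.cons_succ]

lemma sum_paths (Q : A → A → ℝ) (hQ1 : ∀ x, ∑ y, Q x y = 1) :
    ∀ (n : ℕ) (ρ : A → ℝ), (∑ a, ρ a = 1) →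
      ∑ v : Fin (n+1) → A,
        ρ (v 0) * ∏ i ∈ Finset.range n, Q (extv n v i) (extv n v (i+1)) = 1 := by
  intro n
  induction n with
  | zero =>
      intro ρ hρ
      simp only [Finset.range_zero, Finset.prod_empty, mul_one]
      rw [← hρ]
      exact Fintype.sum_equiv (Equiv.funUnique (Fin 1) A) _ _ (fun v => rfl)
  | succ n ih =>
      intro ρ hρ
      rw [← Equiv.sum_comp (Fin.consEquiv fun _ : Fin (n+2) => A)
        (fun v => ρ (v 0) * ∏ i ∈ Finset.range (n+1),
          Q (extv (n+1) v i) (extv (n+1) v (i+1)))]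
      rw [Fintype.sum_prod_type]
      have hterm : ∀ (a : A) (w : Fin (n+1) → A),
          (ρ ((Fin.cons a w : Fin (n+2) → A) 0) * ∏ i ∈ Finset.range (n+1),
            Q (extv (n+1) (Fin.cons a w) i) (extv (n+1) (Fin.cons a w) (i+1)))
          = ρ a * (Q a (w 0) * ∏ i ∈ Finset.range n, Q (extv n w i) (extv n w (i+1))) := by
        intro a w
        rw [Fin.cons_zero, Finset.prod_range_succ']
        simp only [extv_cons_succ, extv_cons_zero, extv_zero, Fin.cons_zero]
        ring
      calc ∑ a : A, ∑ w : Fin (n+1) → A, _ 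
          = ∑ a : A, ∑ w : Fin (n+1) → A,
            ρ a * (Q a (w 0) * ∏ i ∈ Finset.range n, Q (extv n w i) (extv n w (i+1))) := by
            exact Finset.sum_congr rfl fun a _ => Finset.sum_congr rfl fun w _ => hterm a w
        _ = ∑ a : A, ρ a * ∑ w : Fin (n+1) → A,
            (fun y => Q a y) (w 0) * ∏ i ∈ Finset.range n, Q (extv n w i) (extv n w (i+1)) := by
            simp [Finset.mul_sum]
        _ = ∑ a : A, ρ a * 1 := by
            exact Finset.sum_congr rfl fun a _ => by rw [ih (fun y => Q a y) (hQ1 a)]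
        _ = 1 := by simp [hρ]

end Aux

section FDD

variable {A : Type*} [Fintype A] [DecidableEq A]

lemma chain_fdd {Ω : Type*} [MeasurableSpace Ω] (P : Measure Ω) [IsProbabilityMeasure P]
    (X : ℕ → Ω → A) (ρ : A → ℝ) (Q : A → A → ℝ)
    (hρnn : ∀ a, 0 ≤ ρ a) (hρ1 : ∑ a, ρ a = 1)
    (hQnn : ∀ x y, 0 ≤ Q x y) (hQ1 : ∀ x, ∑ y, Q x y = 1)
    (hlaw : IsRealChainLaw P X ρ Q) (n : ℕ)
    (S : (Fin (n+1) → A) → Prop) [DecidablePred S] :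
    P {ω | S (fun j : Fin (n+1) => X j ω)} =
      ENNReal.ofReal (∑ v ∈ Finset.univ.filter S,
        ρ (v 0) * ∏ i ∈ Finset.range n, Q (extv n v i) (extv n v (i+1))) := by
  set term : (Fin (n+1) → A) → ℝ :=
    fun v => ρ (v 0) * ∏ i ∈ Finset.range n, Q (extv n v i) (extv n v (i+1)) with hterm_def
  have htermnn : ∀ v, 0 ≤ term v := fun v =>
    mul_nonneg (hρnn _) (Finset.prod_nonneg fun i _ => hQnn _ _)
  set cyl : (Fin (n+1) → A) → Set Ω :=
    fun v => ⋂ i ∈ Finset.range (n+1), {ω | X i ω = extv n v i} with hcyl_def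
  have hPcyl : ∀ v, P (cyl v) = ENNReal.ofReal (term v) := by
    intro v
    rw [hcyl_def, hlaw n (extv n v), extv_zero]
  have hmem : ∀ (ω : Ω) (v : Fin (n+1) → A),
      ω ∈ cyl v ↔ (fun j : Fin (n+1) => X j ω) = v := by
    intro ω v
    simp only [hcyl_def, Set.mem_iInter, Set.mem_setOf_eq, Finset.mem_range]
    constructor
    · intro h
      funext j
      have := h j.1 j.2
      rwa [extv_eq v j.2, Fin.eta] at this
    · intro h i hi
      rw [extv_eq v hi, ← h]
  have hunion : ∀ (T : (Fin (n+1) → A) → Prop) [DecidablePred T],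
      {ω | T (fun j : Fin (n+1) => X j ω)} = ⋃ v ∈ Finset.univ.filter T, cyl v := by
    intro T _
    ext ω
    simp only [Set.mem_setOf_eq, Set.mem_iUnion, Finset.mem_filter, Finset.mem_univ, true_and]
    constructor
    · intro h
      exact ⟨fun j => X j ω, h, (hmem ω _).mpr rfl⟩
    · rintro ⟨v, hv, hω⟩
      rwa [show (fun j : Fin (n+1) => X j ω) = v from (hmem ω v).mp hω]
  have hble : ∀ (T : (Fin (n+1) → A) → Prop) [DecidablePred T],
      P {ω | T (fun j : Fin (n+1) => X j ω)} ≤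
        ∑ v ∈ Finset.univ.filter T, ENNReal.ofReal (term v) := by
    intro T _
    rw [hunion T]
    refine le_trans (measure_biUnion_finset_le _ _) ?_
    exact le_of_eq (Finset.sum_congr rfl fun v _ => hPcyl v)
  -- total sum is one
  have htot : ∑ v ∈ Finset.univ.filter S, ENNReal.ofReal (term v)
      + ∑ v ∈ Finset.univ.filter (fun v => ¬ S v), ENNReal.ofReal (term v) = 1 := by
    rw [Finset.sum_filter_add_sum_filter_not]
    rw [← ENNReal.ofReal_sum_of_nonneg fun v _ => htermnn v]
    rw [show ∑ v, term v = 1 from sum_paths Q hQ1 n ρ hρ1]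
    simp
  have h1le : (1:ENNReal) ≤ P {ω | S (fun j : Fin (n+1) => X j ω)}
      + P {ω | S (fun j : Fin (n+1) => X j ω)}ᶜ := by
    have h := measure_union_le (μ := P) {ω | S (fun j : Fin (n+1) => X j ω)}
      {ω | S (fun j : Fin (n+1) => X j ω)}ᶜ
    rw [Set.union_compl_self, measure_univ] at h
    exact h
  have hcompl : P {ω | S (fun j : Fin (n+1) => X j ω)}ᶜ ≤
      ∑ v ∈ Finset.univ.filter (fun v => ¬ S v), ENNReal.ofReal (term v) := by
    have : {ω | S (fun j : Fin (n+1) => X j ω)}ᶜ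
        = {ω | (fun v => ¬ S v) (fun j : Fin (n+1) => X j ω)} := rfl
    rw [this]
    exact hble _
  have hge : ∑ v ∈ Finset.univ.filter S, ENNReal.ofReal (term v)
      ≤ P {ω | S (fun j : Fin (n+1) => X j ω)} := by
    set a := ∑ v ∈ Finset.univ.filter S, ENNReal.ofReal (term v)
    set b := ∑ v ∈ Finset.univ.filter (fun v => ¬ S v), ENNReal.ofReal (term v)
    have hbne : b ≠ ⊤ := by
      intro hb
      rw [hb] at htot
      simp at htot
    have hab : a = 1 - b := ENNReal.eq_sub_of_add_eq hbne htot
    rw [hab]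
    exact tsub_le_iff_right.mpr (le_trans h1le (add_le_add le_rfl hcompl))
  rw [ENNReal.ofReal_sum_of_nonneg fun v _ => htermnn v]
  exact le_antisymm (hble S) hge

end FDD

section Rev

variable {A : Type*} [Fintype A] [DecidableEq A]

lemma rev_prod (π : A → ℝ) (Q Qhat : A → A → ℝ)
    (hrev : ∀ x y, π x * Qhat x y = π y * Q y x) (g : ℕ → A) :
    ∀ n : ℕ, π (g n) * ∏ i ∈ Finset.range n, Qhat (g (i+1)) (g i)
      = π (g 0) * ∏ i ∈ Finset.range n, Q (g i) (g (i+1)) := by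
  intro n
  induction n with
  | zero => simp
  | succ n ih =>
      rw [Finset.prod_range_succ, Finset.prod_range_succ]
      calc π (g (n+1)) * ((∏ i ∈ Finset.range n, Qhat (g (i+1)) (g i)) * Qhat (g (n+1)) (g n))
          = (π (g (n+1)) * Qhat (g (n+1)) (g n)) * ∏ i ∈ Finset.range n, Qhat (g (i+1)) (g i) := by
            ring
        _ = (π (g n) * Q (g n) (g (n+1))) * ∏ i ∈ Finset.range n, Qhat (g (i+1)) (g i) := by
            rw [hrev]
        _ = Q (g n) (g (n+1)) * (π (g n) * ∏ i ∈ Finset.range n, Qhat (g (i+1)) (g i)) := by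
            ring
        _ = Q (g n) (g (n+1)) * (π (g 0) * ∏ i ∈ Finset.range n, Q (g i) (g (i+1))) := by
            rw [ih]
        _ = π (g 0) * ((∏ i ∈ Finset.range n, Q (g i) (g (i+1))) * Q (g n) (g (n+1))) := by
            ring

/-- reverse of a path of length N+2, dropping the last point -/
def revPath (N : ℕ) (v : Fin (N+2) → A) : Fin (N+1) → A := fun j => v ⟨N - ↑j, by omega⟩

def unrevPath (N : ℕ) (a : A) (w : Fin (N+1) → A) : Fin (N+2) → A :=
  fun k => if h : (k : ℕ) ≤ N then w ⟨N - ↑k, by omega⟩ else a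

lemma extv_revPath {N : ℕ} (v : Fin (N+2) → A) {i : ℕ} (h : i ≤ N) :
    extv N (revPath N v) i = extv (N+1) v (N - i) := by
  rw [extv_eq _ (by omega : i < N+1), extv_eq _ (by omega : N - i < N+2)]
  show v _ = v _
  congr 1

lemma extv_unrevPath_le {N : ℕ} (a : A) (w : Fin (N+1) → A) {i : ℕ} (h : i ≤ N) :
    extv (N+1) (unrevPath N a w) i = extv N w (N - i) := by
  rw [extv_eq _ (by omega : i < N+2), extv_eq _ (by omega : N - i < N+1)]
  show unrevPath N a w _ = _
  unfold unrevPath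
  rw [dif_pos (by simpa using h)]

lemma extv_unrevPath_last {N : ℕ} (a : A) (w : Fin (N+1) → A) :
    extv (N+1) (unrevPath N a w) (N+1) = a := by
  rw [extv_eq _ (by omega : N+1 < N+2)]
  show unrevPath N a w _ = _
  unfold unrevPath
  rw [dif_neg (by simp)]

lemma revPath_unrevPath {N : ℕ} (a : A) (w : Fin (N+1) → A) :
    revPath N (unrevPath N a w) = w := by
  funext j
  show unrevPath N a w ⟨N - ↑j, _⟩ = w j
  unfold unrevPath
  rw [dif_pos (by simp)]
  congr 1
  exact Fin.ext (by simp; omega)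

lemma unrevPath_revPath {N : ℕ} (v : Fin (N+2) → A) (a : A)
    (h : extv (N+1) v (N+1) = a) :
    unrevPath N a (revPath N v) = v := by
  funext k
  unfold unrevPath
  by_cases hk : (k : ℕ) ≤ N
  · rw [dif_pos hk]
    show v _ = v k
    congr 1
    exact Fin.ext (by simp; omega)
  · rw [dif_neg hk]
    rw [extv_eq _ (by omega : N+1 < N+2)] at h
    rw [← h]
    congr 1
    exact Fin.ext (by simp; omega)

end Rev

section Decomp

variable {A : Type*} [Fintype A] [DecidableEq A]

lemma count_rev {N : ℕ} (v : Fin (N+2) → A) (a : A) :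
    (∑ i ∈ Finset.range (N+1), if extv (N+1) v i = a then 1 else 0 : ℕ)
      = ∑ j ∈ Finset.range (N+1), if extv N (revPath N v) j = a then 1 else 0 := by
  rw [← Finset.sum_range_reflect (fun j => if extv N (revPath N v) j = a then 1 else 0) (N+1)]
  refine Finset.sum_congr rfl fun i hi => ?_
  have hiN : i ≤ N := by simpa [Nat.lt_succ_iff] using hi
  have h1 : N + 1 - 1 - i = N - i := by omega
  rw [h1, extv_revPath _ (by omega : N - i ≤ N)]
  have h2 : N - (N - i) = i := by omega
  rw [h2]

lemma prod_rev {N : ℕ} (Qhat : A → A → ℝ) (v : Fin (N+2) → A) :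
    (∏ i ∈ Finset.range (N+1), Qhat (extv (N+1) v (i+1)) (extv (N+1) v i))
      = Qhat (extv (N+1) v (N+1)) (revPath N v 0)
        * ∏ j ∈ Finset.range N, Qhat (extv N (revPath N v) j) (extv N (revPath N v) (j+1)) := by
  rw [Finset.prod_range_succ]
  rw [← Finset.prod_range_reflect
    (fun j => Qhat (extv N (revPath N v) j) (extv N (revPath N v) (j+1))) N]
  have hlast : extv N (revPath N v) 0 = extv (N+1) v N := by
    rw [extv_revPath _ (by omega : 0 ≤ N), Nat.sub_zero]
  have hmain : ∀ i ∈ Finset.range N,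
      Qhat (extv (N+1) v (i+1)) (extv (N+1) v i)
        = Qhat (extv N (revPath N v) (N - 1 - i)) (extv N (revPath N v) (N - 1 - i + 1)) := by
    intro i hi
    have hiN : i < N := Finset.mem_range.mp hi
    have h1 : N - 1 - i + 1 = N - i := by omega
    rw [h1, extv_revPath _ (by omega : N - 1 - i ≤ N), extv_revPath _ (by omega : N - i ≤ N)]
    have h2 : N - (N - 1 - i) = i + 1 := by omega
    have h3 : N - (N - i) = i := by omega
    rw [h2, h3]
  rw [Finset.prod_congr rfl hmain, ← extv_zero (revPath N v), hlast]
  ring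

lemma sum_rev_decomp (π : A → ℝ) (Qhat : A → A → ℝ) (N r : ℕ) :
    ∑ v ∈ Finset.univ.filter (fun v : Fin (N+2) → A =>
        (∑ i ∈ Finset.range (N+1), if extv (N+1) v i = extv (N+1) v (N+1) then 1 else 0 : ℕ) ≤ r),
      π (extv (N+1) v (N+1))
        * ∏ i ∈ Finset.range (N+1), Qhat (extv (N+1) v (i+1)) (extv (N+1) v i)
    = ∑ a : A, π a * ∑ w ∈ Finset.univ.filter (fun w : Fin (N+1) → A =>
        (∑ i ∈ Finset.range (N+1), if extv N w i = a then 1 else 0 : ℕ) ≤ r),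
        Qhat a (w 0) * ∏ i ∈ Finset.range N, Qhat (extv N w i) (extv N w (i+1)) := by
  have step1 : ∑ v ∈ Finset.univ.filter (fun v : Fin (N+2) → A =>
        (∑ i ∈ Finset.range (N+1), if extv (N+1) v i = extv (N+1) v (N+1) then 1 else 0 : ℕ) ≤ r),
      π (extv (N+1) v (N+1))
        * ∏ i ∈ Finset.range (N+1), Qhat (extv (N+1) v (i+1)) (extv (N+1) v i)
      = ∑ a : A, ∑ v ∈ Finset.univ.filter (fun v : Fin (N+2) → A =>
          ((∑ i ∈ Finset.range (N+1), if extv (N+1) v i = extv (N+1) v (N+1) then 1 else 0 : ℕ) ≤ r)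
            ∧ extv (N+1) v (N+1) = a),
        π (extv (N+1) v (N+1))
          * ∏ i ∈ Finset.range (N+1), Qhat (extv (N+1) v (i+1)) (extv (N+1) v i) := by
    calc ∑ v ∈ Finset.univ.filter (fun v : Fin (N+2) → A =>
            (∑ i ∈ Finset.range (N+1), if extv (N+1) v i = extv (N+1) v (N+1) then 1 else 0 : ℕ) ≤ r),
          π (extv (N+1) v (N+1))
            * ∏ i ∈ Finset.range (N+1), Qhat (extv (N+1) v (i+1)) (extv (N+1) v i)
        = ∑ v ∈ Finset.univ.filter (fun v : Fin (N+2) → A =>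
            (∑ i ∈ Finset.range (N+1), if extv (N+1) v i = extv (N+1) v (N+1) then 1 else 0 : ℕ) ≤ r),
          ∑ a : A, if extv (N+1) v (N+1) = a then
            π (extv (N+1) v (N+1))
              * ∏ i ∈ Finset.range (N+1), Qhat (extv (N+1) v (i+1)) (extv (N+1) v i) else 0 := by
          refine Finset.sum_congr rfl fun v _ => ?_
          simp
      _ = ∑ a : A, ∑ v ∈ Finset.univ.filter (fun v : Fin (N+2) → A =>
            (∑ i ∈ Finset.range (N+1), if extv (N+1) v i = extv (N+1) v (N+1) then 1 else 0 : ℕ) ≤ r),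
          if extv (N+1) v (N+1) = a then
            π (extv (N+1) v (N+1))
              * ∏ i ∈ Finset.range (N+1), Qhat (extv (N+1) v (i+1)) (extv (N+1) v i) else 0 :=
          Finset.sum_comm
      _ = ∑ a : A, ∑ v ∈ (Finset.univ.filter (fun v : Fin (N+2) → A =>
            (∑ i ∈ Finset.range (N+1), if extv (N+1) v i = extv (N+1) v (N+1) then 1 else 0 : ℕ) ≤ r)).filter
              (fun v => extv (N+1) v (N+1) = a),
          π (extv (N+1) v (N+1))
            * ∏ i ∈ Finset.range (N+1), Qhat (extv (N+1) v (i+1)) (extv (N+1) v i) :=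
          Finset.sum_congr rfl fun a _ => (Finset.sum_filter _ _).symm
      _ = _ := by
          refine Finset.sum_congr rfl fun a _ => ?_
          rw [Finset.filter_filter]
  rw [step1]
  refine Finset.sum_congr rfl fun a _ => ?_
  rw [Finset.mul_sum]
  refine Finset.sum_nbij' (i := fun v => revPath N v) (j := fun w => unrevPath N a w)
    ?_ ?_ ?_ ?_ ?_
  · intro v hv
    simp only [Finset.mem_filter, Finset.mem_univ, true_and] at hv ⊢
    obtain ⟨h1, h2⟩ := hv
    rw [h2] at h1
    calc (∑ i ∈ Finset.range (N+1), if extv N (revPath N v) i = a then 1 else 0 : ℕ)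
        = ∑ i ∈ Finset.range (N+1), if extv (N+1) v i = a then 1 else 0 :=
          (count_rev v a).symm
      _ ≤ r := h1
  · intro w hw
    simp only [Finset.mem_filter, Finset.mem_univ, true_and] at hw ⊢
    have hlast := extv_unrevPath_last a w
    refine ⟨?_, hlast⟩
    rw [hlast]
    calc (∑ i ∈ Finset.range (N+1), if extv (N+1) (unrevPath N a w) i = a then 1 else 0 : ℕ)
        = ∑ i ∈ Finset.range (N+1), if extv N (revPath N (unrevPath N a w)) i = a then 1
            else 0 := count_rev _ a
      _ = ∑ i ∈ Finset.range (N+1), if extv N w i = a then 1 else 0 := by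
            rw [revPath_unrevPath]
      _ ≤ r := hw
  · intro v hv
    simp only [Finset.mem_filter, Finset.mem_univ, true_and] at hv
    exact unrevPath_revPath v a hv.2
  · intro w _
    exact revPath_unrevPath a w
  · intro v hv
    simp only [Finset.mem_filter, Finset.mem_univ, true_and] at hv
    rw [prod_rev Qhat v, hv.2]
    try ring

end Decomp

set_option maxHeartbeats 1000000 in
/-- Proposition 3.1: given the Glynn–Ormoneit concentration inequality for
the local times of the chain and of its reversed chain (for every initial distribution),
for `n > (2t₀ + rλ + λ(1 − π_∧))/(λπ_∧)` one has
`P_μ{L_n = r} ≤ P_μ{L_n ≤ r} ≤ C exp(−(n/2)(λπ_∧/t₀ − (2 + (r+1)λ/t₀)/n)²)`,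
where `π_∧ = min_a π_a` and `C = min{|A|, max_a μ_a/π_a}`. (Indexed from 0:
`L_n = Σ_{i<n} 1{X_i = X_n}`.) -/
theorem finite_chain_Ln_bound {A : Type*} [Fintype A] [Nonempty A] [DecidableEq A]
    {Ω Ω' : Type*} [MeasurableSpace Ω] [MeasurableSpace Ω']
    (Q Qhat : A → A → ℝ) (π : A → ℝ)
    (hQnn : ∀ x y, 0 ≤ Q x y) (hQ : ∀ x, ∑ y, Q x y = 1)
    (hπpos : ∀ x, 0 < π x) (hπsum : ∑ x, π x = 1)
    (hstat : ∀ x, ∑ y, π y * Q y x = π x)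
    (hQhat : ∀ x y, Qhat x y = π y * Q y x / π x)
    (t₀ : ℕ) (ht₀ : 1 ≤ t₀) (lam : ℝ) (hlam : 0 < lam ∧ lam ≤ 1)
    (X : ℕ → Ω → A) (Y : ℕ → Ω' → A)
    (Pr : (A → ℝ) → Measure Ω) (Pr' : (A → ℝ) → Measure Ω')
    (hPr : ∀ ρ, IsProbabilityMeasure (Pr ρ)) (hPr' : ∀ ρ, IsProbabilityMeasure (Pr' ρ))
    (hlaw : ∀ ρ : A → ℝ, (∀ a, 0 ≤ ρ a) → (∑ a, ρ a = 1) → IsRealChainLaw (Pr ρ) X ρ Q)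
    (hlaw' : ∀ ρ : A → ℝ, (∀ a, 0 ≤ ρ a) → (∑ a, ρ a = 1) → IsRealChainLaw (Pr' ρ) Y ρ Qhat)
    -- concentration inequality for the chain, any initial distribution
    (hconc : ∀ ρ : A → ℝ, (∀ a, 0 ≤ ρ a) → (∑ a, ρ a = 1) →
      ∀ (a : A) (γ : ℝ), 0 < γ → ∀ n : ℕ, (2 * t₀) / (lam * γ) < n →
        Pr ρ {ω | ((∑ i ∈ Finset.range n, if X i ω = a then 1 else 0 : ℕ) : ℝ)
            - n * π a ≤ -(n * γ)} ≤
          ENNReal.ofReal (Real.exp (-(n / 2) * (lam * γ / t₀ - 2 / n) ^ 2)))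
    -- concentration inequality for the reversed chain, any initial distribution
    (hconc' : ∀ ρ : A → ℝ, (∀ a, 0 ≤ ρ a) → (∑ a, ρ a = 1) →
      ∀ (a : A) (γ : ℝ), 0 < γ → ∀ n : ℕ, (2 * t₀) / (lam * γ) < n →
        Pr' ρ {ω | ((∑ i ∈ Finset.range n, if Y i ω = a then 1 else 0 : ℕ) : ℝ)
            - n * π a ≤ -(n * γ)} ≤
          ENNReal.ofReal (Real.exp (-(n / 2) * (lam * γ / t₀ - 2 / n) ^ 2)))
    (μ : A → ℝ) (hμnn : ∀ a, 0 ≤ μ a) (hμsum : ∑ a, μ a = 1)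
    (πmin : ℝ) (hπmin : IsLeast {x : ℝ | ∃ a, π a = x} πmin)
    (mrat : ℝ) (hmrat : IsGreatest {x : ℝ | ∃ a, μ a / π a = x} mrat)
    (C : ℝ) (hC : C = min (Fintype.card A : ℝ) mrat)
    (r : ℕ) (n : ℕ)
    (hn : (2 * t₀ + r * lam + lam * (1 - πmin)) / (lam * πmin) < n) :
    Pr μ {ω | (∑ i ∈ Finset.range n, if X i ω = X n ω then 1 else 0 : ℕ) = r} ≤
        Pr μ {ω | (∑ i ∈ Finset.range n, if X i ω = X n ω then 1 else 0 : ℕ) ≤ r} ∧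
      Pr μ {ω | (∑ i ∈ Finset.range n, if X i ω = X n ω then 1 else 0 : ℕ) ≤ r} ≤
        ENNReal.ofReal (C * Real.exp
          (-(n / 2) * (lam * πmin / t₀ - (2 + (r + 1) * lam / t₀) / n) ^ 2)) := by
  obtain ⟨hlam0, hlam1⟩ := hlam
  refine ⟨measure_mono fun ω h => le_of_eq h, ?_⟩
  have ht0 : (0:ℝ) < t₀ := by exact_mod_cast ht₀
  have hπminpos : 0 < πmin := by
    obtain ⟨a0, ha0⟩ := hπmin.1
    rw [← ha0]; exact hπpos a0
  have hπminle : ∀ a, πmin ≤ π a := fun a => hπmin.2 ⟨a, rfl⟩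
  have hπmin1 : πmin ≤ 1 := by
    obtain ⟨a0, ha0⟩ := hπmin.1
    have h1 : π a0 ≤ ∑ x, π x :=
      Finset.single_le_sum (fun i _ => (hπpos i).le) (Finset.mem_univ a0)
    rw [hπsum] at h1
    linarith [ha0 ▸ h1]
  have hnum : (0:ℝ) < 2 * t₀ + r * lam + lam * (1 - πmin) := by
    have : (0:ℝ) ≤ r * lam := by positivity
    nlinarith
  have hn0 : (0:ℝ) < n := lt_trans (div_pos hnum (by positivity)) hn
  have hkey : 2 * (t₀:ℝ) + r * lam + lam * (1 - πmin) < n * (lam * πmin) :=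
    (div_lt_iff₀ (by positivity)).mp hn
  -- subsingleton case: event is empty
  rcases subsingleton_or_nontrivial A with hsub | hnontriv
  · have hπm1 : πmin = 1 := by
      obtain ⟨a0, ha0⟩ := hπmin.1
      have : ∑ x, π x = π a0 :=
        Finset.sum_eq_single_of_mem a0 (Finset.mem_univ a0)
          (fun b _ hb => absurd (Subsingleton.elim b a0) hb)
      rw [hπsum] at this
      rw [← ha0, ← this]
    have hrn : r < n := by
      have h1 : (r:ℝ) * lam < n * lam := by
        rw [hπm1] at hkey; nlinarith
      have : (r:ℝ) < n := lt_of_mul_lt_mul_right (by linarith) hlam0.le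
      exact_mod_cast this
    have hempty : {ω | (∑ i ∈ Finset.range n, if X i ω = X n ω then 1 else 0 : ℕ) ≤ r} = ∅ := by
      ext ω
      simp only [Set.mem_setOf_eq, Set.mem_empty_iff_false, iff_false, not_le]
      have hall : ∀ i, X i ω = X n ω := fun i => Subsingleton.elim _ _
      calc r < n := hrn
        _ = ∑ i ∈ Finset.range n, if X i ω = X n ω then 1 else 0 := by simp [hall]
    rw [hempty, measure_empty]
    exact zero_le
  -- nontrivial case
  have hcard2 : (2:ℝ) ≤ Fintype.card A := by exact_mod_cast Fintype.one_lt_card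
  have hhalf : πmin ≤ 1/2 := by
    have h1 : (Fintype.card A : ℝ) * πmin ≤ 1 := by
      rw [← hπsum]
      calc (Fintype.card A : ℝ) * πmin = ∑ _a : A, πmin := by
            rw [Finset.sum_const, Finset.card_univ, nsmul_eq_mul]
        _ ≤ ∑ a, π a := Finset.sum_le_sum fun a _ => hπminle a
    nlinarith
  set γ : ℝ := πmin - r / n with hγ
  have hγpos : 0 < γ := by
    rw [hγ, sub_pos, div_lt_iff₀ hn0]
    nlinarith
  have hcond : (2 * (t₀:ℝ)) / (lam * γ) < n := by
    rw [div_lt_iff₀ (by positivity)]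
    have hexp : (n:ℝ) * (lam * γ) = n * (lam * πmin) - r * lam := by
      rw [hγ]; field_simp
    nlinarith
  set K : ℝ := n * (lam * πmin) - r * lam - 2 * t₀ with hK
  have hKpos : 0 < K := by rw [hK]; nlinarith
  have hl2K : lam ≤ 2 * K := by rw [hK]; nlinarith
  have e1 : lam * γ / t₀ - 2 / n = K / (n * t₀) := by
    rw [hγ, hK]; field_simp
  have e2 : lam * πmin / t₀ - (2 + ((r:ℝ) + 1) * lam / t₀) / n = (K - lam) / (n * t₀) := by
    rw [hK]; field_simp; ring
  have hsq : (lam * πmin / t₀ - (2 + ((r:ℝ) + 1) * lam / t₀) / n) ^ 2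
      ≤ (lam * γ / t₀ - 2 / n) ^ 2 := by
    rw [e1, e2, div_pow, div_pow]
    have hnum2 : (K - lam)^2 ≤ K^2 := sq_le_sq' (by linarith) (by linarith)
    exact div_le_div_of_nonneg_right hnum2 (by positivity)
  have hE12 : Real.exp (-((n:ℝ) / 2) * (lam * γ / t₀ - 2 / n) ^ 2)
      ≤ Real.exp (-((n:ℝ) / 2) * (lam * πmin / t₀ - (2 + ((r:ℝ) + 1) * lam / t₀) / n) ^ 2) := by
    apply Real.exp_le_exp.mpr
    have := mul_le_mul_of_nonneg_left hsq (by positivity : (0:ℝ) ≤ (n:ℝ)/2)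
    linarith
  have hE1nn : (0:ℝ) ≤ Real.exp (-((n:ℝ) / 2) * (lam * γ / t₀ - 2 / n) ^ 2) := (Real.exp_pos _).le
  have hE2nn : (0:ℝ) ≤ Real.exp (-((n:ℝ) / 2) *
      (lam * πmin / t₀ - (2 + ((r:ℝ) + 1) * lam / t₀) / n) ^ 2) := (Real.exp_pos _).le
  -- forward (card) bound
  have hsubU : {ω | (∑ i ∈ Finset.range n, if X i ω = X n ω then 1 else 0 : ℕ) ≤ r} ⊆
      ⋃ a ∈ (Finset.univ : Finset A),
        {ω | ((∑ i ∈ Finset.range n, if X i ω = a then 1 else 0 : ℕ) : ℝ)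
          - n * π a ≤ -(n * γ)} := by
    intro ω hω
    simp only [Set.mem_setOf_eq] at hω
    refine Set.mem_biUnion (Finset.mem_univ (X n ω)) ?_
    simp only [Set.mem_setOf_eq]
    have h1 : ((∑ i ∈ Finset.range n, if X i ω = X n ω then 1 else 0 : ℕ) : ℝ) ≤ r := by
      exact_mod_cast hω
    have h2 : (n:ℝ) * γ = n * πmin - r := by rw [hγ]; field_simp
    have h3 := hπminle (X n ω)
    have h4 : (n:ℝ) * πmin ≤ n * π (X n ω) := by nlinarith
    linarith
  have hfwd : Pr μ {ω | (∑ i ∈ Finset.range n, if X i ω = X n ω then 1 else 0 : ℕ) ≤ r}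
      ≤ (Fintype.card A : ℝ≥0∞)
        * ENNReal.ofReal (Real.exp (-((n:ℝ) / 2) * (lam * γ / t₀ - 2 / n) ^ 2)) := by
    refine le_trans (measure_mono hsubU) ?_
    refine le_trans (measure_biUnion_finset_le _ _) ?_
    refine le_trans (Finset.sum_le_sum fun a _ => hconc μ hμnn hμsum a γ hγpos n hcond) ?_
    rw [Finset.sum_const, Finset.card_univ, nsmul_eq_mul]
  -- reversed chain facts
  have hQhnn : ∀ x y, 0 ≤ Qhat x y := fun x y => by
    rw [hQhat]; exact div_nonneg (mul_nonneg (hπpos y).le (hQnn y x)) (hπpos x).le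
  have hQh1 : ∀ x, ∑ y, Qhat x y = 1 := fun x => by
    simp only [hQhat]
    rw [← Finset.sum_div, hstat x, div_self (hπpos x).ne']
  have hrev : ∀ x y, π x * Qhat x y = π y * Q y x := fun x y => by
    rw [hQhat]; field_simp
    rw [mul_assoc]; exact mul_div_cancel_left₀ _ (hπpos x).ne'
  have hmratge : ∀ a, μ a ≤ mrat * π a := fun a => by
    have h := hmrat.2 ⟨a, rfl⟩
    rw [div_le_iff₀ (hπpos a)] at h
    linarith
  have hmrat0 : 0 ≤ mrat := by
    obtain ⟨a1, ha1⟩ := hmrat.1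
    rw [← ha1]; exact div_nonneg (hμnn a1) (hπpos a1).le
  obtain ⟨N, rfl⟩ : ∃ N, n = N + 1 := ⟨n - 1, by have := Nat.cast_pos.mp hn0; omega⟩
  haveI := hPr μ
  have hcnt : ∀ ω : Ω, (∑ i ∈ Finset.range (N+1),
      if extv (N+1) (fun j : Fin (N+2) => X j ω) i
        = extv (N+1) (fun j : Fin (N+2) => X j ω) (N+1) then 1 else 0 : ℕ)
      = ∑ i ∈ Finset.range (N+1), if X i ω = X (N+1) ω then 1 else 0 := by
    intro ω
    refine Finset.sum_congr rfl fun i hi => ?_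
    rw [extv_eq _ (by omega : N+1 < N+2),
      extv_eq _ (by have := Finset.mem_range.mp hi; omega : i < N+2)]
  have hEeq : {ω | (∑ i ∈ Finset.range (N+1), if X i ω = X (N+1) ω then 1 else 0 : ℕ) ≤ r}
      = {ω | (fun v : Fin (N+2) → A => (∑ i ∈ Finset.range (N+1),
          if extv (N+1) v i = extv (N+1) v (N+1) then 1 else 0 : ℕ) ≤ r)
          (fun j : Fin (N+2) => X j ω)} := by
    ext ω
    simp only [Set.mem_setOf_eq]
    rw [hcnt ω]
  have hfddμ := chain_fdd (Pr μ) X μ Q hμnn hμsum hQnn hQ (hlaw μ hμnn hμsum) (N+1)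
      (fun v : Fin (N+2) → A => (∑ i ∈ Finset.range (N+1),
        if extv (N+1) v i = extv (N+1) v (N+1) then 1 else 0 : ℕ) ≤ r)
  have hU : ∀ a : A,
      (∑ w ∈ Finset.univ.filter (fun w : Fin (N+1) → A =>
        (∑ i ∈ Finset.range (N+1), if extv N w i = a then 1 else 0 : ℕ) ≤ r),
        Qhat a (w 0) * ∏ i ∈ Finset.range N, Qhat (extv N w i) (extv N w (i+1)))
      ≤ Real.exp (-((((N+1:ℕ)):ℝ) / 2) * (lam * γ / t₀ - 2 / (((N+1:ℕ)):ℝ)) ^ 2) := by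
    intro a
    haveI := hPr' (fun y => Qhat a y)
    have hcnt' : ∀ ω' : Ω', (∑ i ∈ Finset.range (N+1),
        if extv N (fun j : Fin (N+1) => Y j ω') i = a then 1 else 0 : ℕ)
        = ∑ i ∈ Finset.range (N+1), if Y i ω' = a then 1 else 0 := by
      intro ω'
      refine Finset.sum_congr rfl fun i hi => ?_
      rw [extv_eq _ (Finset.mem_range.mp hi)]
    have hfdd' := chain_fdd (Pr' (fun y => Qhat a y)) Y (fun y => Qhat a y) Qhat
      (fun y => hQhnn a y) (hQh1 a) hQhnn hQh1
      (hlaw' (fun y => Qhat a y) (fun y => hQhnn a y) (hQh1 a)) N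
      (fun w : Fin (N+1) → A =>
        (∑ i ∈ Finset.range (N+1), if extv N w i = a then 1 else 0 : ℕ) ≤ r)
    have hset : {ω' | (fun w : Fin (N+1) → A =>
          (∑ i ∈ Finset.range (N+1), if extv N w i = a then 1 else 0 : ℕ) ≤ r)
          (fun j : Fin (N+1) => Y j ω')}
        = {ω' | (∑ i ∈ Finset.range (N+1), if Y i ω' = a then 1 else 0 : ℕ) ≤ r} := by
      ext ω'
      simp only [Set.mem_setOf_eq]
      rw [hcnt' ω']
    rw [hset] at hfdd'
    have hsub' : {ω' | (∑ i ∈ Finset.range (N+1), if Y i ω' = a then 1 else 0 : ℕ) ≤ r}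
        ⊆ {ω' | ((∑ i ∈ Finset.range (N+1), if Y i ω' = a then 1 else 0 : ℕ) : ℝ)
            - (((N+1:ℕ)):ℝ) * π a ≤ -((((N+1:ℕ)):ℝ) * γ)} := by
      intro ω' hω'
      simp only [Set.mem_setOf_eq] at hω' ⊢
      have h1 : ((∑ i ∈ Finset.range (N+1), if Y i ω' = a then 1 else 0 : ℕ) : ℝ) ≤ r := by
        exact_mod_cast hω'
      have h2 : ((((N+1:ℕ)):ℝ)) * γ = (((N+1:ℕ)):ℝ) * πmin - r := by
        rw [hγ]; field_simp
      have h3 := hπminle a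
      have h4 : ((((N+1:ℕ)):ℝ)) * πmin ≤ (((N+1:ℕ)):ℝ) * π a := by nlinarith
      linarith
    have h5 : Pr' (fun y => Qhat a y)
          {ω' | (∑ i ∈ Finset.range (N+1), if Y i ω' = a then 1 else 0 : ℕ) ≤ r}
        ≤ ENNReal.ofReal
          (Real.exp (-((((N+1:ℕ)):ℝ) / 2) * (lam * γ / t₀ - 2 / (((N+1:ℕ)):ℝ)) ^ 2)) :=
      le_trans (measure_mono hsub')
        (hconc' (fun y => Qhat a y) (fun y => hQhnn a y) (hQh1 a) a γ hγpos (N+1) hcond)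
    rw [hfdd'] at h5
    exact (ENNReal.ofReal_le_ofReal_iff (Real.exp_nonneg _)).mp h5
  have hsum2 : (∑ a : A, π a * ∑ w ∈ Finset.univ.filter (fun w : Fin (N+1) → A =>
        (∑ i ∈ Finset.range (N+1), if extv N w i = a then 1 else 0 : ℕ) ≤ r),
        Qhat a (w 0) * ∏ i ∈ Finset.range N, Qhat (extv N w i) (extv N w (i+1)))
      ≤ Real.exp (-((((N+1:ℕ)):ℝ) / 2) * (lam * γ / t₀ - 2 / (((N+1:ℕ)):ℝ)) ^ 2) := by
    calc (∑ a : A, π a * ∑ w ∈ Finset.univ.filter (fun w : Fin (N+1) → A =>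
            (∑ i ∈ Finset.range (N+1), if extv N w i = a then 1 else 0 : ℕ) ≤ r),
          Qhat a (w 0) * ∏ i ∈ Finset.range N, Qhat (extv N w i) (extv N w (i+1)))
        ≤ ∑ a : A, π a
            * Real.exp (-((((N+1:ℕ)):ℝ) / 2) * (lam * γ / t₀ - 2 / (((N+1:ℕ)):ℝ)) ^ 2) :=
          Finset.sum_le_sum fun a _ => mul_le_mul_of_nonneg_left (hU a) (hπpos a).le
      _ = Real.exp (-((((N+1:ℕ)):ℝ) / 2) * (lam * γ / t₀ - 2 / (((N+1:ℕ)):ℝ)) ^ 2) := by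
          rw [← Finset.sum_mul, hπsum, one_mul]
  have hTle : (∑ v ∈ Finset.univ.filter (fun v : Fin (N+2) → A =>
        (∑ i ∈ Finset.range (N+1), if extv (N+1) v i = extv (N+1) v (N+1) then 1 else 0 : ℕ) ≤ r),
      μ (v 0) * ∏ i ∈ Finset.range (N+1), Q (extv (N+1) v i) (extv (N+1) v (i+1)))
      ≤ mrat * Real.exp (-((((N+1:ℕ)):ℝ) / 2) * (lam * γ / t₀ - 2 / (((N+1:ℕ)):ℝ)) ^ 2) := by
    have step1 : ∀ v ∈ Finset.univ.filter (fun v : Fin (N+2) → A =>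
        (∑ i ∈ Finset.range (N+1), if extv (N+1) v i = extv (N+1) v (N+1) then 1 else 0 : ℕ) ≤ r),
        μ (v 0) * ∏ i ∈ Finset.range (N+1), Q (extv (N+1) v i) (extv (N+1) v (i+1))
        ≤ mrat * (π (extv (N+1) v (N+1))
            * ∏ i ∈ Finset.range (N+1), Qhat (extv (N+1) v (i+1)) (extv (N+1) v i)) := by
      intro v _
      have hrp := rev_prod π Q Qhat hrev (extv (N+1) v) (N+1)
      rw [extv_zero] at hrp
      calc μ (v 0) * ∏ i ∈ Finset.range (N+1), Q (extv (N+1) v i) (extv (N+1) v (i+1))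
          ≤ (mrat * π (v 0))
            * ∏ i ∈ Finset.range (N+1), Q (extv (N+1) v i) (extv (N+1) v (i+1)) :=
            mul_le_mul_of_nonneg_right (hmratge (v 0))
              (Finset.prod_nonneg fun i _ => hQnn _ _)
        _ = mrat * (π (v 0)
            * ∏ i ∈ Finset.range (N+1), Q (extv (N+1) v i) (extv (N+1) v (i+1))) := by ring
        _ = mrat * (π (extv (N+1) v (N+1))
            * ∏ i ∈ Finset.range (N+1), Qhat (extv (N+1) v (i+1)) (extv (N+1) v i)) := by
            rw [← hrp]
    calc (∑ v ∈ Finset.univ.filter (fun v : Fin (N+2) → A =>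
            (∑ i ∈ Finset.range (N+1),
              if extv (N+1) v i = extv (N+1) v (N+1) then 1 else 0 : ℕ) ≤ r),
          μ (v 0) * ∏ i ∈ Finset.range (N+1), Q (extv (N+1) v i) (extv (N+1) v (i+1)))
        ≤ ∑ v ∈ Finset.univ.filter (fun v : Fin (N+2) → A =>
            (∑ i ∈ Finset.range (N+1),
              if extv (N+1) v i = extv (N+1) v (N+1) then 1 else 0 : ℕ) ≤ r),
          mrat * (π (extv (N+1) v (N+1))
            * ∏ i ∈ Finset.range (N+1), Qhat (extv (N+1) v (i+1)) (extv (N+1) v i)) :=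
          Finset.sum_le_sum step1
      _ = mrat * ∑ v ∈ Finset.univ.filter (fun v : Fin (N+2) → A =>
            (∑ i ∈ Finset.range (N+1),
              if extv (N+1) v i = extv (N+1) v (N+1) then 1 else 0 : ℕ) ≤ r),
          π (extv (N+1) v (N+1))
            * ∏ i ∈ Finset.range (N+1), Qhat (extv (N+1) v (i+1)) (extv (N+1) v i) :=
          (Finset.mul_sum _ _ _).symm
      _ = mrat * ∑ a : A, π a * ∑ w ∈ Finset.univ.filter (fun w : Fin (N+1) → A =>
            (∑ i ∈ Finset.range (N+1), if extv N w i = a then 1 else 0 : ℕ) ≤ r),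
          Qhat a (w 0) * ∏ i ∈ Finset.range N, Qhat (extv N w i) (extv N w (i+1)) := by
          rw [sum_rev_decomp π Qhat N r]
      _ ≤ mrat * Real.exp (-((((N+1:ℕ)):ℝ) / 2) * (lam * γ / t₀ - 2 / (((N+1:ℕ)):ℝ)) ^ 2) :=
          mul_le_mul_of_nonneg_left hsum2 hmrat0
  have hbwd : Pr μ {ω | (∑ i ∈ Finset.range (N+1),
        if X i ω = X (N+1) ω then 1 else 0 : ℕ) ≤ r}
      ≤ ENNReal.ofReal (mrat * Real.exp (-((((N+1:ℕ)):ℝ) / 2)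
          * (lam * πmin / t₀ - (2 + ((r:ℝ) + 1) * lam / t₀) / (((N+1:ℕ)):ℝ)) ^ 2)) := by
    rw [hEeq, hfddμ]
    apply ENNReal.ofReal_le_ofReal
    refine le_trans hTle ?_
    exact mul_le_mul_of_nonneg_left hE12 hmrat0
  rcases le_total ((Fintype.card A : ℝ)) mrat with hcm | hcm
  · rw [hC, min_eq_left hcm]
    refine le_trans hfwd ?_
    rw [ENNReal.ofReal_mul (by positivity : (0:ℝ) ≤ ((Fintype.card A):ℝ)),
      ENNReal.ofReal_natCast]
    exact mul_le_mul' le_rfl (ENNReal.ofReal_le_ofReal hE12)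
  · rw [hC, min_eq_right hcm]
    exact hbwd
end

section
/- In the regime switching model, for all n ≥ 1 and all 0 ≤ r ≤ n, P{𝓛_n = r} = E[ C(L_n, r) Σ_{k=1}^∞ p_{X_{n+1},k}^{1+r} (1 − p_{X_{n+1},k})^{L_n − r} ], where C(L_n, r) is the binomial coefficient (taken to be 0 when L_n < r), 𝓛_n = Σ_{i=1}^n 1{Z_i = Z_{n+1}}, and L_n = Σ_{i=1}^n 1{X_i = X_{n+1}}. -/
open MeasureTheory ENNReal Finset


lemma aux_tsum_pi_prod : ∀ (N : ℕ) (g : Fin N → ℕ → ℝ≥0∞),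
    ∑' k : Fin N → ℕ, ∏ i, g i (k i) = ∏ i, ∑' x, g i x := by
  intro N
  induction N with
  | zero =>
      intro g
      rw [tsum_eq_single (default : Fin 0 → ℕ) (fun b hb => absurd (Subsingleton.elim b default) hb)]
      simp
  | succ N ih =>
      intro g
      have he := (Fin.snocEquiv (fun _ : Fin (N+1) => ℕ)).tsum_eq
        (fun k => ∏ i, g i (k i))
      rw [← he, ENNReal.tsum_prod']
      simp only [Fin.snocEquiv, Equiv.coe_fn_mk]
      have : ∀ (m : ℕ) (k' : Fin N → ℕ),
          (∏ i, g i (Fin.snoc (α := fun _ => ℕ) k' m i)) = (∏ i, g i.castSucc (k' i)) * g (Fin.last N) m := by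
        intro m k'
        rw [Fin.prod_univ_castSucc]
        simp [Fin.snoc_castSucc, Fin.snoc_last]
      simp only [this]
      rw [Fin.prod_univ_castSucc (f := fun i : Fin (N+1) => ∑' x, g i x),
        ← ih (fun i x => g i.castSucc x)]
      calc ∑' (m : ℕ), ∑' (k' : Fin N → ℕ), (∏ i, g i.castSucc (k' i)) * g (Fin.last N) m
          = ∑' (m : ℕ), (∑' (k' : Fin N → ℕ), ∏ i, g i.castSucc (k' i)) * g (Fin.last N) m := by
            congr 1; ext m; rw [ENNReal.tsum_mul_right]
        _ = (∑' (k' : Fin N → ℕ), ∏ i, g i.castSucc (k' i)) * ∑' m, g (Fin.last N) m := by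
            rw [ENNReal.tsum_mul_left]


lemma aux_tsum_ne (q : ℕ → ℝ≥0∞) (hq : ∑' x, q x = 1) (m : ℕ) :
    ∑' x, (if x = m then 0 else q x) = 1 - q m := by
  have h : ∑' x, q x = q m + ∑' x, (if x = m then 0 else q x) := by
    convert ENNReal.tsum_eq_add_tsum_ite (f := q) m
  have hqm : q m ≠ ∞ := by
    intro h'
    have : q m ≤ 1 := hq ▸ ENNReal.le_tsum m
    simp [h'] at this
  have h2 : (∑' x, (if x = m then 0 else q x)) + q m = 1 := by
    rw [add_comm, ← hq, h]
  exact ENNReal.eq_sub_of_add_eq hqm h2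


lemma aux_count (N : ℕ) (f : Fin N → ℕ → ℝ≥0∞) (hf : ∀ i, ∑' x, f i x = 1)
    (M : Finset (Fin N)) (q : ℕ → ℝ≥0∞) (hq : ∑' x, q x = 1)
    (hfM : ∀ i ∈ M, f i = q) (m r : ℕ) :
    ∑' k : Fin N → ℕ, (if (M.filter fun i => k i = m).card = r then ∏ i, f i (k i) else 0)
      = (M.card.choose r : ℝ≥0∞) * (q m ^ r * (1 - q m) ^ (M.card - r)) := by
  classical
  have step1 : ∀ k : Fin N → ℕ,
      (if (M.filter fun i => k i = m).card = r then ∏ i, f i (k i) else 0)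
      = ∑ W ∈ M.powersetCard r,
          (if (M.filter fun i => k i = m) = W then ∏ i, f i (k i) else 0) := by
    intro k
    rw [Finset.sum_ite_eq (M.powersetCard r) (M.filter fun i => k i = m)
      (fun _ => ∏ i, f i (k i))]
    by_cases hc : (M.filter fun i => k i = m).card = r
    · rw [if_pos hc, if_pos (Finset.mem_powersetCard.mpr ⟨Finset.filter_subset _ _, hc⟩)]
    · rw [if_neg hc, if_neg (fun hmem => hc (Finset.mem_powersetCard.mp hmem).2)]
  have step3 : ∀ W ∈ M.powersetCard r,
      (∑' k : Fin N → ℕ, (if (M.filter fun i => k i = m) = W then ∏ i, f i (k i) else 0))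
      = q m ^ r * (1 - q m) ^ (M.card - r) := by
    intro W hW
    obtain ⟨hWM, hWr⟩ := Finset.mem_powersetCard.mp hW
    set g : Fin N → ℕ → ℝ≥0∞ :=
      fun i x => if i ∈ M then (if ((x = m) ↔ (i ∈ W)) then f i x else 0) else f i x with hg
    have hpt : ∀ k : Fin N → ℕ,
        (if (M.filter fun i => k i = m) = W then ∏ i, f i (k i) else 0)
        = ∏ i, g i (k i) := by
      intro k
      by_cases hc : (M.filter fun i => k i = m) = W
      · rw [if_pos hc]
        apply Finset.prod_congr rfl
        intro i _
        by_cases hiM : i ∈ M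
        · have hiff : (k i = m) ↔ (i ∈ W) := by
            constructor
            · intro h; rw [← hc]; exact Finset.mem_filter.mpr ⟨hiM, h⟩
            · intro h
              have h2 : i ∈ M.filter fun j => k j = m := by rw [hc]; exact h
              exact (Finset.mem_filter.mp h2).2
          simp [hg, hiM, hiff]
        · simp [hg, hiM]
      · rw [if_neg hc]
        have hex : ∃ i ∈ M, ¬((k i = m) ↔ (i ∈ W)) := by
          by_contra hall
          push_neg at hall
          apply hc
          apply Finset.ext
          intro j
          simp only [Finset.mem_filter]
          constructor
          · rintro ⟨hjM, hjm⟩; exact (hall j hjM).mp hjm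
          · intro hjW; exact ⟨hWM hjW, (hall j (hWM hjW)).mpr hjW⟩
        obtain ⟨i, hiM, hi⟩ := hex
        symm
        apply Finset.prod_eq_zero (Finset.mem_univ i)
        simp [hg, hiM, hi]
    rw [tsum_congr hpt, aux_tsum_pi_prod]
    have hval : ∀ i : Fin N,
        (∑' x, g i x) = if i ∈ W then q m else (if i ∈ M then 1 - q m else 1) := by
      intro i
      by_cases hiW : i ∈ W
      · have hiM : i ∈ M := hWM hiW
        rw [if_pos hiW]
        have h1 : ∀ x, g i x = if x = m then q x else 0 := by
          intro x
          by_cases hx : x = m <;> simp [hg, hiM, hiW, hx, hfM i hiM]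
        rw [tsum_congr h1, tsum_eq_single m (fun b hb => if_neg hb), if_pos rfl]
      · by_cases hiM : i ∈ M
        · rw [if_neg hiW, if_pos hiM]
          have h1 : ∀ x, g i x = if x = m then 0 else q x := by
            intro x
            by_cases hx : x = m <;> simp [hg, hiM, hiW, hx, hfM i hiM]
          rw [tsum_congr h1]
          exact aux_tsum_ne q hq m
        · rw [if_neg hiW, if_neg hiM]
          have h1 : ∀ x, g i x = f i x := fun x => by simp [hg, hiM]
          rw [tsum_congr h1]
          exact hf i
    rw [Finset.prod_congr rfl (fun i _ => hval i), ← Finset.prod_sdiff (Finset.subset_univ M)]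
    have h1 : (∏ i ∈ univ \ M, (if i ∈ W then q m else if i ∈ M then 1 - q m else 1)) = 1 := by
      apply Finset.prod_eq_one
      intro i hi
      have hiM := (Finset.mem_sdiff.mp hi).2
      rw [if_neg (fun h => hiM (hWM h)), if_neg hiM]
    rw [h1, one_mul, ← Finset.prod_sdiff hWM]
    have h2 : (∏ i ∈ M \ W, (if i ∈ W then q m else if i ∈ M then 1 - q m else 1))
        = (1 - q m) ^ (M.card - r) := by
      rw [Finset.prod_congr rfl (fun i hi => ?_), Finset.prod_const,
        Finset.card_sdiff_of_subset hWM, hWr]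
      obtain ⟨hiM, hiW⟩ := Finset.mem_sdiff.mp hi
      rw [if_neg hiW, if_pos hiM]
    have h3 : (∏ i ∈ W, (if i ∈ W then q m else if i ∈ M then 1 - q m else 1))
        = q m ^ r := by
      rw [Finset.prod_congr rfl (fun i hi => if_pos hi), Finset.prod_const, hWr]
    rw [h2, h3, mul_comm]
  calc ∑' k : Fin N → ℕ, (if (M.filter fun i => k i = m).card = r then ∏ i, f i (k i) else 0)
      = ∑' k : Fin N → ℕ, ∑ W ∈ M.powersetCard r,
          (if (M.filter fun i => k i = m) = W then ∏ i, f i (k i) else 0) := tsum_congr step1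
    _ = ∑ W ∈ M.powersetCard r, ∑' k : Fin N → ℕ,
          (if (M.filter fun i => k i = m) = W then ∏ i, f i (k i) else 0) :=
        Summable.tsum_finsetSum (fun _ _ => ENNReal.summable)
    _ = ∑ W ∈ M.powersetCard r, (q m ^ r * (1 - q m) ^ (M.card - r)) :=
        Finset.sum_congr rfl step3
    _ = (M.card.choose r : ℝ≥0∞) * (q m ^ r * (1 - q m) ^ (M.card - r)) := by
        rw [Finset.sum_const, Finset.card_powersetCard, nsmul_eq_mul]


lemma aux_measure_partition {Ω ι : Type*} [MeasurableSpace Ω] (P : Measure Ω)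
    [IsProbabilityMeasure P] [Countable ι] (S : ι → Set Ω)
    (hcov : ∀ ω, ∃ i, ω ∈ S i) (htot : ∑' i, P (S i) = 1)
    (q : ι → Prop) [DecidablePred q] :
    P {ω | ∃ i, q i ∧ ω ∈ S i} = ∑' i, if q i then P (S i) else 0 := by
  classical
  set s : Set ι := {i | q i} with hs
  set T : Set Ω := {ω | ∃ i, q i ∧ ω ∈ S i}
  set T' : Set Ω := {ω | ∃ i, ¬ q i ∧ ω ∈ S i}
  have hT : T = ⋃ i : s, S i.1 := by
    ext ω
    simp only [T, Set.mem_setOf_eq, Set.mem_iUnion, Subtype.exists, exists_prop]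
    rfl
  have hT' : T' = ⋃ i : ↥sᶜ, S i.1 := by
    ext ω
    simp only [T', Set.mem_setOf_eq, Set.mem_iUnion, Subtype.exists, exists_prop]
    rfl
  have h1 : P T ≤ ∑' i : s, P (S i.1) := by
    rw [hT]; exact measure_iUnion_le _
  have h2 : P T' ≤ ∑' i : ↥sᶜ, P (S i.1) := by
    rw [hT']; exact measure_iUnion_le _
  have h3 : (∑' i : s, P (S i.1)) + (∑' i : ↥sᶜ, P (S i.1)) = 1 := by
    rw [← htot]
    exact Summable.tsum_add_tsum_compl (f := fun i => P (S i)) (s := s) ENNReal.summable ENNReal.summable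
  have hunion : T ∪ T' = Set.univ := by
    ext ω
    simp only [Set.mem_union, Set.mem_univ, iff_true, T, T', Set.mem_setOf_eq]
    obtain ⟨i, hi⟩ := hcov ω
    by_cases hqi : q i
    · exact Or.inl ⟨i, hqi, hi⟩
    · exact Or.inr ⟨i, hqi, hi⟩
  have h4 : (1 : ℝ≥0∞) ≤ P T + P T' := by
    calc (1 : ℝ≥0∞) = P (T ∪ T') := by rw [hunion, measure_univ]
      _ ≤ P T + P T' := measure_union_le _ _
  have hfin : (∑' i : ↥sᶜ, P (S i.1)) ≠ ∞ := by
    intro h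
    rw [h] at h3
    simp at h3
  have hge : (∑' i : s, P (S i.1)) ≤ P T := by
    rw [← ENNReal.add_le_add_iff_right hfin, h3]
    exact h4.trans (add_le_add_right h2 _)
  have hPT : P T = ∑' i : s, P (S i.1) := le_antisymm h1 hge
  rw [hPT, tsum_subtype s (fun i => P (S i))]
  apply tsum_congr
  intro i
  by_cases hqi : q i <;> simp [Set.indicator_apply, hs, hqi]


lemma aux_lintegral_partition {Ω ι : Type*} [MeasurableSpace Ω] (P : Measure Ω)
    [IsProbabilityMeasure P] [Countable ι] (S : ι → Set Ω)
    (hcov : ∀ ω, ∃ i, ω ∈ S i) (htot : ∑' i, P (S i) = 1)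
    (f : Ω → ℝ≥0∞) (c : ι → ℝ≥0∞) (hfc : ∀ i, ∀ ω ∈ S i, f ω = c i) :
    ∫⁻ ω, f ω ∂P = ∑' i, c i * P (S i) := by
  classical
  set T : ι → Set Ω := fun i => toMeasurable P (S i) with hT
  have hm : ∀ i, MeasurableSet (T i) := fun i => measurableSet_toMeasurable P (S i)
  have hsub : ∀ i, S i ⊆ T i := fun i => subset_toMeasurable P (S i)
  have hPT : ∀ i, P (T i) = P (S i) := fun i => measure_toMeasurable (S i)
  -- each S k ∩ T i is null for k ≠ i
  have subkey : ∀ i k, k ≠ i → P (S k ∩ T i) = 0 := by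
    intro i k hk
    set U : Set Ω := ⋃ j : ↥(({i} : Set ι)ᶜ), S j.1 with hU
    set c' : ℝ≥0∞ := ∑' j : ↥(({i} : Set ι)ᶜ), P (S j.1) with hc'
    have hUc : P U ≤ c' := measure_iUnion_le _
    have hPSfin : P (S i) ≠ ∞ := (measure_lt_top P _).ne
    have hsplit : P (S i) + c' = 1 := by
      rw [← htot]
      have h5 := Summable.tsum_add_tsum_compl (f := fun j => P (S j)) (s := ({i} : Set ι))
        ENNReal.summable ENNReal.summable
      rw [← h5, tsum_singleton i (fun j => P (S j))]
    have hc'eq : c' = 1 - P (S i) := ENNReal.eq_sub_of_add_eq hPSfin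
      (by rw [add_comm]; exact hsplit)
    have hcompl : (T i)ᶜ ⊆ U := by
      intro ω hω
      obtain ⟨j, hj⟩ := hcov ω
      have hji : j ∈ ({i} : Set ι)ᶜ := by
        simp only [Set.mem_compl_iff, Set.mem_singleton_iff]
        rintro rfl
        exact hω (hsub j hj)
      exact Set.mem_iUnion.mpr ⟨⟨j, hji⟩, hj⟩
    have hPcompl : P ((T i)ᶜ) = 1 - P (S i) := by
      rw [measure_compl (hm i) (measure_lt_top P _).ne, measure_univ, hPT]
    have hdiff : (1 : ℝ≥0∞) - P (S i) ≤ P (U \ T i) := by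
      rw [← hPcompl]
      apply measure_mono
      intro ω hω
      exact ⟨hcompl hω, hω⟩
    have hcara : P (U ∩ T i) + P (U \ T i) = P U := measure_inter_add_diff U (hm i)
    have hzero : P (U ∩ T i) = 0 := by
      by_contra hne
      have hpos : 0 < P (U ∩ T i) := pos_iff_ne_zero.mpr hne
      have : P (U ∩ T i) + (1 - P (S i)) ≤ 1 - P (S i) := by
        calc P (U ∩ T i) + (1 - P (S i)) ≤ P (U ∩ T i) + P (U \ T i) :=
              add_le_add_right hdiff _
          _ = P U := hcara
          _ ≤ c' := hUc
          _ = 1 - P (S i) := hc'eq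
      have hfin2 : (1 : ℝ≥0∞) - P (S i) ≠ ∞ := by
        intro h
        exact (ENNReal.sub_ne_top one_ne_top) h
      have := (ENNReal.add_le_add_iff_right hfin2).mp (by
        calc P (U ∩ T i) + (1 - P (S i)) ≤ 1 - P (S i) := this
          _ = 0 + (1 - P (S i)) := by rw [zero_add])
      exact hne (le_antisymm this zero_le)
    apply measure_mono_null _ hzero
    intro ω hω
    exact ⟨Set.mem_iUnion.mpr ⟨⟨k, by simpa using hk⟩, hω.1⟩, hω.2⟩
  have key : ∀ i j, i ≠ j → P (T i ∩ T j) = 0 := by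
    intro i j hij
    have hsubs : T i ∩ T j ⊆ ⋃ k, (S k ∩ T i ∩ T j) := by
      intro ω hω
      obtain ⟨k, hk⟩ := hcov ω
      exact Set.mem_iUnion.mpr ⟨k, ⟨hk, hω.1⟩, hω.2⟩
    apply measure_mono_null hsubs
    apply measure_iUnion_null
    intro k
    by_cases hki : k = i
    · subst hki
      apply measure_mono_null _ (subkey j k hij)
      intro ω hω
      exact ⟨hω.1.1, hω.2⟩
    · apply measure_mono_null _ (subkey i k hki)
      intro ω hω
      exact ⟨hω.1.1, hω.1.2⟩
  -- the measurable version of f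
  set g : Ω → ℝ≥0∞ := fun ω => ∑' i, (T i).indicator (fun _ => c i) ω with hgdef
  have hgm : Measurable g := Measurable.ennreal_tsum
    (fun i => measurable_const.indicator (hm i))
  set B : Set Ω := ⋃ (i) (j) (_ : i ≠ j), T i ∩ T j with hB
  have hBnull : P B = 0 := by
    apply measure_iUnion_null
    intro i
    apply measure_iUnion_null
    intro j
    apply measure_iUnion_null
    intro hij
    exact key i j hij
  have hae : f =ᵐ[P] g := by
    rw [Filter.EventuallyEq, ae_iff]
    apply measure_mono_null _ hBnull
    intro ω hω
    simp only [Set.mem_setOf_eq] at hω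
    by_contra hωB
    apply hω
    obtain ⟨i₀, hi₀⟩ := hcov ω
    have huniq : ∀ i, ω ∈ T i → i = i₀ := by
      intro i hi
      by_contra hne
      exact hωB (Set.mem_iUnion.mpr ⟨i, Set.mem_iUnion.mpr ⟨i₀,
        Set.mem_iUnion.mpr ⟨hne, hi, hsub i₀ hi₀⟩⟩⟩)
    have hg : g ω = c i₀ := by
      show (∑' i, (T i).indicator (fun _ => c i) ω) = c i₀
      rw [tsum_eq_single i₀]
      · simp [Set.indicator_apply, hsub i₀ hi₀]
      · intro b hb
        simp only [Set.indicator_apply]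
        rw [if_neg]
        intro hωb
        exact hb (huniq b hωb)
    rw [hg, hfc i₀ ω hi₀]
  rw [lintegral_congr_ae hae, hgdef]
  rw [lintegral_tsum (fun i => (measurable_const.indicator (hm i)).aemeasurable)]
  apply tsum_congr
  intro i
  rw [lintegral_indicator (hm i), setLIntegral_const, hPT]


def auxExt {A : Type*} (N : ℕ) (a : Fin (N+1) → A) : ℕ → A :=
  fun i => a ⟨min i N, by omega⟩

lemma aux_telescope {A : Type*} [Countable A] [Nonempty A]
    (R : ℕ → (ℕ → A) → A → ℝ≥0∞)
    (hRdep : ∀ (n : ℕ) (a a' : ℕ → A), (∀ i < n, a i = a' i) → R n a = R n a')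
    (hRsum : ∀ (n : ℕ) (a : ℕ → A), ∑' b, R n a b = 1) :
    ∀ N : ℕ, ∑' a : Fin (N+1) → A,
      ∏ i ∈ Finset.range (N+1), R i (auxExt N a) (auxExt N a i) = 1 := by
  intro N
  induction N with
  | zero =>
      set a₀ : ℕ → A := fun _ => Classical.arbitrary A with ha₀
      have e := ((Equiv.funUnique (Fin 1) A).symm).tsum_eq
        (fun a : Fin 1 → A => ∏ i ∈ Finset.range 1, R i (auxExt 0 a) (auxExt 0 a i))
      rw [← e]
      have : ∀ b : A, (∏ i ∈ Finset.range 1,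
          R i (auxExt 0 ((Equiv.funUnique (Fin 1) A).symm b))
            (auxExt 0 ((Equiv.funUnique (Fin 1) A).symm b) i)) = R 0 a₀ b := by
        intro b
        rw [Finset.prod_range_one]
        have h1 : auxExt 0 ((Equiv.funUnique (Fin 1) A).symm b) = fun _ => b := rfl
        rw [h1, hRdep 0 (fun _ => b) a₀ (by omega)]
      rw [tsum_congr this, hRsum 0 a₀]
  | succ N ih =>
      have e := (Fin.snocEquiv (fun _ : Fin (N+2) => A)).tsum_eq
        (fun a : Fin (N+2) → A =>
          ∏ i ∈ Finset.range (N+2), R i (auxExt (N+1) a) (auxExt (N+1) a i))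
      rw [← e, ENNReal.tsum_prod', ENNReal.tsum_comm]
      have key : ∀ (a' : Fin (N+1) → A) (b : A),
          (∏ i ∈ Finset.range (N+2),
            R i (auxExt (N+1) (Fin.snocEquiv (fun _ => A) (b, a')))
              (auxExt (N+1) (Fin.snocEquiv (fun _ => A) (b, a')) i))
          = (∏ i ∈ Finset.range (N+1), R i (auxExt N a') (auxExt N a' i))
              * R (N+1) (auxExt N a') b := by
        intro a' b
        set E : ℕ → A := auxExt (N+1) (Fin.snocEquiv (fun _ => A) (b, a')) with hE
        have hsnoc : Fin.snocEquiv (fun _ : Fin (N+2) => A) (b, a')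
            = Fin.snoc a' b := rfl
        have hagree : ∀ j, j ≤ N → E j = auxExt N a' j := by
          intro j hj
          have hmin1 : min j (N+1) = j := by omega
          have hmin2 : min j N = j := by omega
          show (Fin.snoc a' b : Fin (N+2) → A) ⟨min j (N+1), by omega⟩ = a' ⟨min j N, by omega⟩
          have hcast : (⟨min j (N+1), by omega⟩ : Fin (N+2))
              = Fin.castSucc ⟨min j N, by omega⟩ := by
            apply Fin.ext
            simp [hmin1, hmin2]
          rw [hcast, Fin.snoc_castSucc]
        have hlast : E (N+1) = b := by
          show (Fin.snoc a' b : Fin (N+2) → A) ⟨min (N+1) (N+1), by omega⟩ = b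
          have : (⟨min (N+1) (N+1), by omega⟩ : Fin (N+2)) = Fin.last (N+1) := by
            apply Fin.ext; simp
          rw [this, Fin.snoc_last]
        rw [Finset.prod_range_succ]
        congr 1
        · apply Finset.prod_congr rfl
          intro i hi
          have hiN : i ≤ N := by
            have := Finset.mem_range.mp hi
            omega
          rw [hRdep i E (auxExt N a') (fun j hj => hagree j (by omega)), hagree i hiN]
        · rw [hRdep (N+1) E (auxExt N a') (fun j hj => hagree j (by omega)), hlast]
      calc ∑' (a' : Fin (N+1) → A), ∑' (b : A),
            (∏ i ∈ Finset.range (N+2),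
              R i (auxExt (N+1) (Fin.snocEquiv (fun _ => A) (b, a')))
                (auxExt (N+1) (Fin.snocEquiv (fun _ => A) (b, a')) i))
          = ∑' (a' : Fin (N+1) → A), ∑' (b : A),
            (∏ i ∈ Finset.range (N+1), R i (auxExt N a') (auxExt N a' i))
              * R (N+1) (auxExt N a') b := by
            apply tsum_congr; intro a'; apply tsum_congr; intro b; exact key a' b
        _ = ∑' (a' : Fin (N+1) → A),
            (∏ i ∈ Finset.range (N+1), R i (auxExt N a') (auxExt N a' i))
              * ∑' (b : A), R (N+1) (auxExt N a') b := by
            apply tsum_congr; intro a'; rw [ENNReal.tsum_mul_left]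
        _ = ∑' (a' : Fin (N+1) → A),
            (∏ i ∈ Finset.range (N+1), R i (auxExt N a') (auxExt N a' i)) := by
            apply tsum_congr; intro a'; rw [hRsum (N+1) (auxExt N a'), mul_one]
        _ = 1 := ih


lemma aux_G {A : Type*} [DecidableEq A] (p : A → ℕ → ℝ≥0∞) (hp : ∀ a, ∑' x, p a x = 1)
    (N r : ℕ) (a : Fin (N+1) → A) :
    ∑' k : Fin (N+1) → ℕ,
      (if (∑ i : Fin N, if (a i.castSucc, k i.castSucc)
            = (a (Fin.last N), k (Fin.last N)) then 1 else 0) = r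
        then ∏ i, p (a i) (k i) else 0)
    = (((Finset.univ.filter fun i : Fin N =>
          a i.castSucc = a (Fin.last N)).card.choose r : ℝ≥0∞))
        * ∑' m, p (a (Fin.last N)) m ^ (r+1)
            * (1 - p (a (Fin.last N)) m) ^
              ((Finset.univ.filter fun i : Fin N =>
                a i.castSucc = a (Fin.last N)).card - r) := by
  classical
  set b := a (Fin.last N) with hb
  set M : Finset (Fin N) := Finset.univ.filter (fun i => a i.castSucc = b) with hM
  set L := M.card with hL
  rw [← (Fin.snocEquiv (fun _ : Fin (N+1) => ℕ)).tsum_eq, ENNReal.tsum_prod']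
  have hsummand : ∀ (m : ℕ) (k' : Fin N → ℕ),
      (if (∑ i : Fin N, if (a i.castSucc, (Fin.snocEquiv (fun _ => ℕ) (m, k')) i.castSucc)
            = (b, (Fin.snocEquiv (fun _ => ℕ) (m, k')) (Fin.last N)) then 1 else 0) = r
        then ∏ i, p (a i) ((Fin.snocEquiv (fun _ => ℕ) (m, k')) i) else 0)
      = (if (M.filter fun i => k' i = m).card = r
          then ∏ i : Fin N, p (a i.castSucc) (k' i) else 0) * p b m := by
    intro m k'
    have hcs : ∀ i : Fin N, (Fin.snocEquiv (fun _ : Fin (N+1) => ℕ) (m, k')) i.castSucc = k' i :=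
      fun i => by simp [Fin.snocEquiv]
    have hlast : (Fin.snocEquiv (fun _ : Fin (N+1) => ℕ) (m, k')) (Fin.last N) = m :=
      by simp [Fin.snocEquiv]
    have hcond : (∑ i : Fin N, if (a i.castSucc, k' i) = (b, m) then 1 else 0)
        = (M.filter (fun i => k' i = m)).card := by
      rw [hM, Finset.filter_filter, Finset.card_filter]
      apply Finset.sum_congr rfl
      intro i _
      congr 1
      simp [Prod.ext_iff]
    have hprod : (∏ i, p (a i) ((Fin.snocEquiv (fun _ : Fin (N+1) => ℕ) (m, k')) i))
        = (∏ i : Fin N, p (a i.castSucc) (k' i)) * p b m := by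
      rw [Fin.prod_univ_castSucc]
      congr 1
      · exact Finset.prod_congr rfl (fun i _ => by rw [hcs i])
      · rw [hlast, hb]
    simp only [hcs, hlast, hcond, hprod, ite_mul, zero_mul]
  rw [tsum_congr (fun m => tsum_congr (fun k' => hsummand m k'))]
  have hstep : ∀ m : ℕ,
      (∑' k' : Fin N → ℕ, (if (M.filter fun i => k' i = m).card = r
          then ∏ i : Fin N, p (a i.castSucc) (k' i) else 0) * p b m)
      = ((L.choose r : ℝ≥0∞) * (p b m ^ r * (1 - p b m) ^ (L - r))) * p b m := by
    intro m
    rw [ENNReal.tsum_mul_right]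
    congr 1
    exact aux_count N (fun i => p (a i.castSucc)) (fun i => hp _) M (p b) (hp b)
      (fun i hi => by
        rw [hM, Finset.mem_filter] at hi
        show p (a i.castSucc) = p b
        rw [hi.2]) m r
  rw [tsum_congr hstep]
  have hre : ∀ m : ℕ,
      ((L.choose r : ℝ≥0∞) * (p b m ^ r * (1 - p b m) ^ (L - r))) * p b m
      = (L.choose r : ℝ≥0∞) * (p b m ^ (r+1) * (1 - p b m) ^ (L - r)) := by
    intro m
    rw [pow_succ]
    ring
  rw [tsum_congr hre, ENNReal.tsum_mul_left]



lemma auxExt_nat {X : Type*} (N : ℕ) (a : Fin (N+1) → X) (i : ℕ) (h : i < N+1) :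
    auxExt N a i = a ⟨i, h⟩ := by
  unfold auxExt
  congr 1
  apply Fin.ext
  simp
  omega

/-- Lemma 4.2: in the regime switching model, for all `n ≥ 1` and `0 ≤ r ≤ n`,
`P{𝓛_n = r} = E[ binom(L_n, r) Σ_k p_{X_{n+1},k}^{1+r} (1 − p_{X_{n+1},k})^{L_n − r} ]`,
where the binomial coefficient is `0` when `L_n < r`. (Indexed from 0:
`𝓛_n = Σ_{i<n} 1{Z_i = Z_n}` and `L_n = Σ_{i<n} 1{X_i = X_n}`.) -/
theorem regime_switching_occupancy_repr {A : Type*} [Countable A] [DecidableEq A]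
    {Ω : Type*} [MeasurableSpace Ω] (P : Measure Ω) [IsProbabilityMeasure P]
    (Z : ℕ → Ω → A × ℕ)
    (p : A → ℕ → ℝ≥0∞) (hp : ∀ a, ∑' k, p a k = 1)
    (R : ℕ → (ℕ → A) → A → ℝ≥0∞)
    (hRdep : ∀ (n : ℕ) (a a' : ℕ → A), (∀ i < n, a i = a' i) → R n a = R n a')
    (hRsum : ∀ (n : ℕ) (a : ℕ → A), ∑' b, R n a b = 1)
    (hZ : ∀ (n : ℕ) (a : ℕ → A) (k : ℕ → ℕ),
      P (⋂ i ∈ Finset.range (n + 1), {ω | Z i ω = (a i, k i)}) =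
        (∏ i ∈ Finset.range (n + 1), R i a (a i)) *
          ∏ i ∈ Finset.range (n + 1), p (a i) (k i))
    (n r : ℕ) (hn : 1 ≤ n) (hr : r ≤ n) :
    P {ω | (∑ i ∈ Finset.range n, if Z i ω = Z n ω then 1 else 0 : ℕ) = r} =
      ∫⁻ ω, (((∑ i ∈ Finset.range n, if (Z i ω).1 = (Z n ω).1 then 1 else 0 : ℕ).choose r
          : ℝ≥0∞)) *
        ∑' k, p (Z n ω).1 k ^ (r + 1) *
          (1 - p (Z n ω).1 k) ^
            ((∑ i ∈ Finset.range n, if (Z i ω).1 = (Z n ω).1 then 1 else 0 : ℕ) - r) ∂P := by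
  classical
  -- nonemptiness
  have hΩne : Nonempty Ω := by
    by_contra h
    rw [not_nonempty_iff] at h
    have h1 : (Set.univ : Set Ω) = ∅ := Set.univ_eq_empty_iff.mpr h
    have h2 := measure_univ (μ := P)
    rw [h1, measure_empty] at h2
    exact zero_ne_one h2
  obtain ⟨ω₀⟩ := hΩne
  have hAne : Nonempty A := ⟨(Z 0 ω₀).1⟩
  -- the partition
  set S : (Fin (n+1) → A) × (Fin (n+1) → ℕ) → Set Ω := fun c =>
    ⋂ i ∈ Finset.range (n+1), {ω | Z i ω = (auxExt n c.1 i, auxExt n c.2 i)} with hS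
  have hZmem : ∀ c ω, ω ∈ S c → ∀ i, i < n + 1 →
      Z i ω = (auxExt n c.1 i, auxExt n c.2 i) := by
    intro c ω hω i hi
    exact Set.mem_iInter₂.mp hω i (Finset.mem_range.mpr hi)
  have hPS : ∀ c, P (S c) =
      (∏ i ∈ Finset.range (n+1), R i (auxExt n c.1) (auxExt n c.1 i)) *
        ∏ i ∈ Finset.range (n+1), p (auxExt n c.1 i) (auxExt n c.2 i) :=
    fun c => hZ n (auxExt n c.1) (auxExt n c.2)
  have hcov : ∀ ω, ∃ c, ω ∈ S c := by
    intro ω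
    refine ⟨(fun i => (Z i ω).1, fun i => (Z i ω).2), Set.mem_iInter₂.mpr ?_⟩
    intro i hi
    have hi' : i < n + 1 := Finset.mem_range.mp hi
    show Z i ω = _
    rw [auxExt_nat n _ i hi', auxExt_nat n _ i hi']
  have hPPfin : ∀ (a : Fin (n+1) → A) (k : Fin (n+1) → ℕ),
      (∏ i ∈ Finset.range (n+1), p (auxExt n a i) (auxExt n k i))
        = ∏ i : Fin (n+1), p (a i) (k i) := by
    intro a k
    rw [← Fin.prod_univ_eq_prod_range (fun i => p (auxExt n a i) (auxExt n k i)) (n+1)]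
    apply Finset.prod_congr rfl
    intro i _
    rw [auxExt_nat n a i.1 i.2, auxExt_nat n k i.1 i.2]
  have hPP1 : ∀ a : Fin (n+1) → A,
      (∑' k : Fin (n+1) → ℕ, ∏ i : Fin (n+1), p (a i) (k i)) = 1 := by
    intro a
    rw [aux_tsum_pi_prod (n+1) (fun i x => p (a i) x)]
    simp [hp]
  have htot : ∑' c, P (S c) = 1 := by
    rw [ENNReal.tsum_prod']
    calc ∑' (a : Fin (n+1) → A) (k : Fin (n+1) → ℕ), P (S (a, k))
        = ∑' (a : Fin (n+1) → A),
            (∏ i ∈ Finset.range (n+1), R i (auxExt n a) (auxExt n a i)) *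
              ∑' (k : Fin (n+1) → ℕ), ∏ i : Fin (n+1), p (a i) (k i) := by
          apply tsum_congr; intro a
          rw [← ENNReal.tsum_mul_left]
          apply tsum_congr; intro k
          rw [hPS (a, k), hPPfin a k]
      _ = ∑' (a : Fin (n+1) → A),
            ∏ i ∈ Finset.range (n+1), R i (auxExt n a) (auxExt n a i) := by
          apply tsum_congr; intro a
          rw [hPP1 a, mul_one]
      _ = 1 := aux_telescope R hRdep hRsum n
  -- the condition and value functions
  set q : (Fin (n+1) → A) × (Fin (n+1) → ℕ) → Prop := fun c =>
    (∑ i ∈ Finset.range n, if (auxExt n c.1 i, auxExt n c.2 i)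
        = (auxExt n c.1 n, auxExt n c.2 n) then 1 else 0 : ℕ) = r with hq
  set F : (Fin (n+1) → A) × (Fin (n+1) → ℕ) → ℝ≥0∞ := fun c =>
    (((∑ i ∈ Finset.range n, if auxExt n c.1 i = auxExt n c.1 n then 1 else 0 : ℕ).choose r
        : ℝ≥0∞))
      * ∑' m, p (auxExt n c.1 n) m ^ (r+1)
          * (1 - p (auxExt n c.1 n) m) ^
            ((∑ i ∈ Finset.range n, if auxExt n c.1 i = auxExt n c.1 n then 1 else 0 : ℕ) - r)
    with hF
  have hsum_eq : ∀ c ω, ω ∈ S c →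
      (∑ i ∈ Finset.range n, if Z i ω = Z n ω then 1 else 0 : ℕ)
      = ∑ i ∈ Finset.range n, if (auxExt n c.1 i, auxExt n c.2 i)
          = (auxExt n c.1 n, auxExt n c.2 n) then 1 else 0 := by
    intro c ω hω
    apply Finset.sum_congr rfl
    intro i hi
    have hi' : i < n + 1 := by have := Finset.mem_range.mp hi; omega
    rw [hZmem c ω hω i hi', hZmem c ω hω n (by omega)]
  have hset : {ω | (∑ i ∈ Finset.range n, if Z i ω = Z n ω then 1 else 0 : ℕ) = r}
      = {ω | ∃ c, q c ∧ ω ∈ S c} := by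
    ext ω
    simp only [Set.mem_setOf_eq]
    constructor
    · intro hsum
      obtain ⟨c, hc⟩ := hcov ω
      refine ⟨c, ?_, hc⟩
      show (∑ i ∈ Finset.range n, if (auxExt n c.1 i, auxExt n c.2 i)
          = (auxExt n c.1 n, auxExt n c.2 n) then 1 else 0 : ℕ) = r
      rw [← hsum_eq c ω hc]
      exact hsum
    · rintro ⟨c, hqc, hc⟩
      rw [hsum_eq c ω hc]
      exact hqc
  have hfc : ∀ c, ∀ ω ∈ S c,
      ((((∑ i ∈ Finset.range n, if (Z i ω).1 = (Z n ω).1 then 1 else 0 : ℕ).choose r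
          : ℝ≥0∞)) *
        ∑' k, p (Z n ω).1 k ^ (r + 1) *
          (1 - p (Z n ω).1 k) ^
            ((∑ i ∈ Finset.range n, if (Z i ω).1 = (Z n ω).1 then 1 else 0 : ℕ) - r)) = F c := by
    intro c ω hω
    have h1 : ∀ i, i < n + 1 → (Z i ω).1 = auxExt n c.1 i := by
      intro i hi
      rw [hZmem c ω hω i hi]
    have hLω : (∑ i ∈ Finset.range n, if (Z i ω).1 = (Z n ω).1 then 1 else 0 : ℕ)
        = ∑ i ∈ Finset.range n, if auxExt n c.1 i = auxExt n c.1 n then 1 else 0 := by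
      apply Finset.sum_congr rfl
      intro i hi
      have hi' : i < n + 1 := by have := Finset.mem_range.mp hi; omega
      rw [h1 i hi', h1 n (by omega)]
    have hbω : (Z n ω).1 = auxExt n c.1 n := h1 n (by omega)
    rw [hF]
    rw [hLω, hbω]
  rw [hset, aux_measure_partition P S hcov htot q,
    aux_lintegral_partition P S hcov htot _ F hfc]
  -- the analytic identity
  rw [ENNReal.tsum_prod', ENNReal.tsum_prod']
  apply tsum_congr
  intro a
  have hbval : auxExt n a n = a (Fin.last n) := auxExt_nat n a n (by omega)
  have hLval : (∑ i ∈ Finset.range n, if auxExt n a i = auxExt n a n then 1 else 0 : ℕ)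
      = (Finset.univ.filter fun i : Fin n => a i.castSucc = a (Fin.last n)).card := by
    rw [Finset.card_filter,
      ← Fin.sum_univ_eq_sum_range (fun i => if auxExt n a i = auxExt n a n then 1 else 0) n]
    apply Finset.sum_congr rfl
    intro i _
    have h2 : auxExt n a i.1 = a i.castSucc := by
      rw [auxExt_nat n a i.1 (by omega)]
      exact congrArg a (Fin.ext (by simp))
    rw [h2, hbval]
  have hq_iff : ∀ k : Fin (n+1) → ℕ, q (a, k) ↔
      ((∑ i : Fin n, if (a i.castSucc, k i.castSucc)
          = (a (Fin.last n), k (Fin.last n)) then 1 else 0) = r) := by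
    intro k
    show (∑ i ∈ Finset.range n, if (auxExt n a i, auxExt n k i)
        = (auxExt n a n, auxExt n k n) then 1 else 0 : ℕ) = r ↔ _
    have hkb : auxExt n k n = k (Fin.last n) := auxExt_nat n k n (by omega)
    rw [← Fin.sum_univ_eq_sum_range (fun i => if (auxExt n a i, auxExt n k i)
        = (auxExt n a n, auxExt n k n) then 1 else 0) n]
    have hterm : ∀ i : Fin n, (if (auxExt n a i.1, auxExt n k i.1)
        = (auxExt n a n, auxExt n k n) then (1:ℕ) else 0)
        = if (a i.castSucc, k i.castSucc) = (a (Fin.last n), k (Fin.last n)) then 1 else 0 := by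
      intro i
      rw [auxExt_nat n a i.1 (by omega), auxExt_nat n k i.1 (by omega), hbval, hkb]
      have hc : (⟨(i : ℕ), by omega⟩ : Fin (n+1)) = i.castSucc := by
        apply Fin.ext
        simp
      rw [hc]
    rw [Finset.sum_congr rfl (fun i _ => hterm i)]
  have hFa : ∀ k : Fin (n+1) → ℕ, F (a, k)
      = (((Finset.univ.filter fun i : Fin n =>
            a i.castSucc = a (Fin.last n)).card.choose r : ℝ≥0∞))
          * ∑' m, p (a (Fin.last n)) m ^ (r+1)
              * (1 - p (a (Fin.last n)) m) ^
                ((Finset.univ.filter fun i : Fin n =>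
                  a i.castSucc = a (Fin.last n)).card - r) := by
    intro k
    rw [hF]
    show (((∑ i ∈ Finset.range n, if auxExt n a i = auxExt n a n then 1 else 0 : ℕ).choose r
        : ℝ≥0∞)) * _ = _
    rw [hLval, hbval]
  calc ∑' k : Fin (n+1) → ℕ, (if q (a, k) then P (S (a, k)) else 0)
      = (∏ i ∈ Finset.range (n+1), R i (auxExt n a) (auxExt n a i)) *
          ∑' k : Fin (n+1) → ℕ,
            (if (∑ i : Fin n, if (a i.castSucc, k i.castSucc)
                = (a (Fin.last n), k (Fin.last n)) then 1 else 0) = r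
              then ∏ i : Fin (n+1), p (a i) (k i) else 0) := by
        rw [← ENNReal.tsum_mul_left]
        apply tsum_congr
        intro k
        by_cases hqk : q (a, k)
        · rw [if_pos hqk, if_pos ((hq_iff k).mp hqk), hPS (a, k), hPPfin a k]
        · rw [if_neg hqk, if_neg (fun h => hqk ((hq_iff k).mpr h)), mul_zero]
    _ = (∏ i ∈ Finset.range (n+1), R i (auxExt n a) (auxExt n a i)) *
          ((((Finset.univ.filter fun i : Fin n =>
              a i.castSucc = a (Fin.last n)).card.choose r : ℝ≥0∞))
            * ∑' m, p (a (Fin.last n)) m ^ (r+1)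
                * (1 - p (a (Fin.last n)) m) ^
                  ((Finset.univ.filter fun i : Fin n =>
                    a i.castSucc = a (Fin.last n)).card - r)) := by
        rw [aux_G p hp n r a]
    _ = ∑' k : Fin (n+1) → ℕ, F (a, k) * P (S (a, k)) := by
        have hRseq : ∀ k : Fin (n+1) → ℕ, F (a, k) * P (S (a, k)) =
            (F (a, fun _ => 0)) *
              ((∏ i ∈ Finset.range (n+1), R i (auxExt n a) (auxExt n a i)) *
                ∏ i : Fin (n+1), p (a i) (k i)) := by
          intro k
          rw [hPS (a, k), hPPfin a k, hFa k, ← hFa (fun _ => 0)]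
        rw [tsum_congr hRseq, ENNReal.tsum_mul_left, ENNReal.tsum_mul_left, hPP1 a, mul_one,
          hFa (fun _ => 0)]
        ring
end

section
/- Let P = (p_k)_{k≥1} be a probability distribution on ℕ_+ whose counting function ν(ε) = Σ_k 1{p_k ≥ ε} satisfies ν(ε)/(ε^{−α}ℓ(1/ε)) → 1 as ε → 0, for some α ∈ (0,1) and slowly varying ℓ. Then for all r ≥ 0: lim_{n→∞} C(n,r) Σ_{k=1}^∞ p_k^{r+1} (1 − p_k)^{n−r} / ( n^{α−1} ℓ(n) ) = αΓ(r+1−α)/r!. -/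
open Filter

/-- `ℓ` is slowly varying at `+∞`: `ℓ(cx)/ℓ(x) → 1` for every `c > 0`. -/
def SlowlyVarying (ℓ : ℝ → ℝ) : Prop :=
  ∀ c : ℝ, 0 < c → Tendsto (fun x => ℓ (c * x) / ℓ x) atTop (nhds 1)

open scoped Classical in
/-- The (real-valued) counting function `ν(ε) = Σ_k 1{p_k ≥ ε}` of a distribution `p`. -/
noncomputable def nuR (p : ℕ → ℝ) (ε : ℝ) : ℝ :=
  ∑' k, if ε ≤ p k then (1 : ℝ) else 0

namespace KarlinAux

open MeasureTheory Set Real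
open scoped ENNReal Topology

/-- `ℝ≥0∞`-valued counting function (measurable version). -/
noncomputable def nuE (p : ℕ → ℝ) (x : ℝ) : ℝ≥0∞ :=
  ∑' k, Set.indicator (Set.Iic (p k)) (fun _ => (1 : ℝ≥0∞)) x

lemma measurable_nuE (p : ℕ → ℝ) : Measurable (nuE p) :=
  Measurable.ennreal_tsum fun k => measurable_const.indicator measurableSet_Iic

/-- Real, measurable version of the counting function; agrees with `nuR` on `Ioi 0`. -/
noncomputable def nu0 (p : ℕ → ℝ) (x : ℝ) : ℝ := (nuE p x).toReal

lemma measurable_nu0 (p : ℕ → ℝ) : Measurable (nu0 p) :=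
  (measurable_nuE p).ennreal_toReal

lemma nu0_nonneg (p : ℕ → ℝ) (x : ℝ) : 0 ≤ nu0 p x := ENNReal.toReal_nonneg

section basic
variable {p : ℕ → ℝ} (hp : Summable p)
include hp

lemma finite_S {x : ℝ} (hx : 0 < x) : {k | x ≤ p k}.Finite := by
  have h0 := hp.tendsto_atTop_zero
  have : ∀ᶠ k in atTop, p k < x := by
    have := h0.eventually (eventually_lt_nhds hx)
    simpa using this
  obtain ⟨N, hN⟩ := eventually_atTop.mp this
  apply Set.Finite.subset (Set.finite_Iio N)
  intro k hk
  simp only [Set.mem_setOf_eq] at hk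
  by_contra hlt
  exact absurd hk (not_le.mpr (hN k (not_lt.mp hlt)))

lemma nuE_eq {x : ℝ} (hx : 0 < x) :
    nuE p x = ((finite_S hp hx).toFinset.card : ℝ≥0∞) := by
  classical
  have hind : ∀ k, Set.indicator (Set.Iic (p k)) (fun _ => (1:ℝ≥0∞)) x
      = if x ≤ p k then 1 else 0 := fun k => by simp [Set.indicator_apply, Set.mem_Iic]
  rw [nuE]
  simp_rw [hind]
  rw [tsum_eq_sum (s := (finite_S hp hx).toFinset)
    (fun k hk => if_neg (fun h => hk (by simpa using h)))]
  rw [show ∑ k ∈ (finite_S hp hx).toFinset, (if x ≤ p k then (1:ℝ≥0∞) else 0)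
      = ∑ _k ∈ (finite_S hp hx).toFinset, (1:ℝ≥0∞) from
    Finset.sum_congr rfl fun k hk => if_pos (by simpa using hk)]
  simp

lemma nuR_eq {x : ℝ} (hx : 0 < x) :
    nuR p x = ((finite_S hp hx).toFinset.card : ℝ) := by
  classical
  rw [nuR, tsum_eq_sum (s := (finite_S hp hx).toFinset)
    (fun k hk => by
      rw [if_neg (fun h => hk (by simpa using h))])]
  rw [show (∑ k ∈ (finite_S hp hx).toFinset, if x ≤ p k then (1:ℝ) else 0)
      = ∑ _k ∈ (finite_S hp hx).toFinset, (1:ℝ) from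
    Finset.sum_congr rfl fun k hk => by rw [if_pos (by simpa using hk)]]
  simp

lemma nu0_eq_nuR {x : ℝ} (hx : 0 < x) : nu0 p x = nuR p x := by
  rw [nu0, nuE_eq hp hx, nuR_eq hp hx]
  simp

lemma nu0_antitone {x y : ℝ} (hx : 0 < x) (hxy : x ≤ y) :
    nu0 p y ≤ nu0 p x := by
  have hmono : nuE p y ≤ nuE p x := by
    apply ENNReal.tsum_le_tsum
    intro k
    simp only [Set.indicator_apply, Set.mem_Iic]
    by_cases h : y ≤ p k
    · simp [h, le_trans hxy h]
    · simp only [h, if_false]; exact zero_le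
  refine ENNReal.toReal_mono ?_ hmono
  rw [nuE_eq hp hx]
  exact ENNReal.natCast_ne_top _

end basic

/-- Derivative of `x ↦ x^(r+1)(1-x)^(n-r)` (for `r+1 ≤ n`). -/
noncomputable def G (n r : ℕ) (x : ℝ) : ℝ :=
  x ^ r * (1 - x) ^ (n - r - 1) * ((r + 1 : ℝ) - (n + 1) * x)

lemma continuous_G (n r : ℕ) : Continuous (G n r) := by
  unfold G; fun_prop

lemma hasDerivAt_g (n r : ℕ) (h : r + 1 ≤ n) (x : ℝ) :
    HasDerivAt (fun y : ℝ => y ^ (r + 1) * (1 - y) ^ (n - r)) (G n r x) x := by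
  have h1 : HasDerivAt (fun y : ℝ => y ^ (r + 1)) (((r:ℝ) + 1) * x ^ r) x := by
    simpa using hasDerivAt_pow (r + 1) x
  have h2 : HasDerivAt (fun y : ℝ => (1 - y) ^ (n - r))
      (((n - r : ℕ) : ℝ) * (1 - x) ^ (n - r - 1) * (-1)) x := by
    exact ((hasDerivAt_id x).const_sub 1).pow (n - r)
  have := h1.fun_mul h2
  refine HasDerivAt.congr_deriv this ?_
  symm
  have hm : n - r = (n - r - 1) + 1 := by omega
  have hcast : ((n - r : ℕ) : ℝ) = (n : ℝ) - r := by
    have : r ≤ n := by omega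
    push_cast [this]; ring
  rw [G, hcast]
  nth_rewrite 2 [hm]
  rw [pow_succ]
  ring

lemma abs_G_le (n r : ℕ) {x : ℝ} (hx : 0 ≤ x) (hx1 : x ≤ 1) :
    |G n r x| ≤ (n + r + 2 : ℝ) * x ^ r := by
  rw [G, abs_mul, abs_mul]
  have h1 : |x ^ r| = x ^ r := abs_of_nonneg (pow_nonneg hx _)
  have h2 : |(1 - x) ^ (n - r - 1)| ≤ 1 := by
    rw [abs_pow]
    apply pow_le_one₀ (abs_nonneg _)
    rw [abs_le]; constructor <;> linarith
  have h3 : |(r + 1 : ℝ) - (n + 1) * x| ≤ (n + r + 2 : ℝ) := by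
    rw [abs_le]
    have hnx : 0 ≤ ((n:ℝ) + 1) * x := by positivity
    have hnx1 : ((n:ℝ) + 1) * x ≤ (n:ℝ) + 1 := by nlinarith
    constructor <;> [skip; skip] <;> nlinarith
  calc |x ^ r| * |(1 - x) ^ (n - r - 1)| * |(r + 1 : ℝ) - (n + 1) * x|
      ≤ x ^ r * 1 * (n + r + 2 : ℝ) := by
        apply mul_le_mul _ h3 (abs_nonneg _) (by positivity)
        rw [h1]
        exact mul_le_mul_of_nonneg_left h2 (pow_nonneg hx _)
    _ = (n + r + 2 : ℝ) * x ^ r := by ring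

section main

variable {p : ℕ → ℝ} (hpnn : ∀ k, 0 ≤ p k) (hp : HasSum p 1)
include hpnn hp

lemma p_le_one (k : ℕ) : p k ≤ 1 := by
  exact le_hasSum hp k fun j _ => hpnn j

/-- Step 1: the occupancy sum as an integral against the counting function. -/
lemma sum_eq_integral (n r : ℕ) (h : r + 1 ≤ n) :
    ∑' k, p k ^ (r + 1) * (1 - p k) ^ (n - r)
      = ∫ x in Set.Ioc (0:ℝ) 1, nu0 p x * G n r x := by
  classical
  have hsum : Summable p := ⟨1, hp⟩
  set μ := volume.restrict (Set.Ioc (0:ℝ) 1) with hμ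
  set f : ℕ → ℝ → ℝ := fun k => (Set.Ioc (0:ℝ) (p k)).indicator (G n r) with hf
  -- Step A: each integral is the summand
  have stepA : ∀ k, ∫ x, f k x ∂μ = p k ^ (r + 1) * (1 - p k) ^ (n - r) := by
    intro k
    rw [hf]
    simp only []
    rw [MeasureTheory.integral_indicator measurableSet_Ioc, hμ,
      MeasureTheory.Measure.restrict_restrict measurableSet_Ioc,
      Set.inter_eq_self_of_subset_left (Set.Ioc_subset_Ioc_right (p_le_one hpnn hp k))]
    rw [← intervalIntegral.integral_of_le (hpnn k)]
    rw [intervalIntegral.integral_eq_sub_of_hasDerivAt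
      (fun x _ => hasDerivAt_g n r h x)
      ((continuous_G n r).intervalIntegrable 0 (p k))]
    simp
  -- measurability
  have hmeas : ∀ k, MeasureTheory.AEStronglyMeasurable (f k) μ := fun k =>
    (((continuous_G n r).measurable).indicator measurableSet_Ioc).aestronglyMeasurable
  -- L¹ bound
  have hC : ∀ k, ∀ x ∈ Set.Ioc (0:ℝ) (p k),
      (‖G n r x‖₊ : ℝ≥0∞) ≤ ENNReal.ofReal ((n:ℝ) + r + 2) := by
    intro k x hx
    obtain ⟨hx0, hx1⟩ := hx
    have hx1' : x ≤ 1 := le_trans hx1 (p_le_one hpnn hp k)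
    have := abs_G_le n r hx0.le hx1'
    have hb : |G n r x| ≤ ((n:ℝ) + r + 2 : ℝ) := by
      have hxr : x ^ r ≤ 1 := pow_le_one₀ hx0.le hx1'
      nlinarith [pow_nonneg hx0.le r]
    rw [← enorm_eq_nnnorm, Real.enorm_eq_ofReal_abs]
    exact ENNReal.ofReal_le_ofReal hb
  have hbound : (∑' k, ∫⁻ x, ‖f k x‖₊ ∂μ) ≠ ⊤ := by
    have hle : ∀ k, ∫⁻ x, ‖f k x‖₊ ∂μ ≤ ENNReal.ofReal ((n:ℝ) + r + 2) * ENNReal.ofReal (p k) := by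
      intro k
      rw [hf]
      simp only []
      have : (fun x => (‖(Set.Ioc (0:ℝ) (p k)).indicator (G n r) x‖₊ : ℝ≥0∞))
          = fun x => (Set.Ioc (0:ℝ) (p k)).indicator (fun y => (‖G n r y‖₊ : ℝ≥0∞)) x := by
        funext x
        by_cases hx : x ∈ Set.Ioc (0:ℝ) (p k)
        · rw [Set.indicator_of_mem hx, Set.indicator_of_mem hx]
        · rw [Set.indicator_of_notMem hx, Set.indicator_of_notMem hx]; simp
      rw [this, MeasureTheory.lintegral_indicator measurableSet_Ioc]
      calc ∫⁻ x in Set.Ioc (0:ℝ) (p k), (‖G n r x‖₊ : ℝ≥0∞) ∂μ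
          ≤ ∫⁻ _x in Set.Ioc (0:ℝ) (p k), ENNReal.ofReal ((n:ℝ) + r + 2) ∂μ := by
            apply MeasureTheory.setLIntegral_mono measurable_const
            intro x hx
            exact hC k x hx
        _ = ENNReal.ofReal ((n:ℝ) + r + 2) * μ (Set.Ioc (0:ℝ) (p k)) := by
            rw [MeasureTheory.setLIntegral_const]
        _ ≤ ENNReal.ofReal ((n:ℝ) + r + 2) * ENNReal.ofReal (p k) := by
            apply mul_le_mul_right
            rw [hμ, MeasureTheory.Measure.restrict_apply measurableSet_Ioc]
            refine le_trans (measure_mono Set.inter_subset_left) ?_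
            rw [Real.volume_Ioc]
            simp
    refine ne_top_of_le_ne_top ?_ (ENNReal.tsum_le_tsum hle)
    rw [ENNReal.tsum_mul_left]
    have : ∑' k, ENNReal.ofReal (p k) = ENNReal.ofReal 1 := by
      rw [← ENNReal.ofReal_tsum_of_nonneg hpnn hsum, hp.tsum_eq]
    rw [this]
    simp
  -- Step B: swap
  have stepB := MeasureTheory.integral_tsum hmeas hbound
  -- Step C: pointwise identification
  have stepC : ∀ x ∈ Set.Ioc (0:ℝ) 1, (∑' k, f k x) = nu0 p x * G n r x := by
    intro x hx
    obtain ⟨hx0, _⟩ := hx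
    have : ∀ k, f k x = (if x ≤ p k then (1:ℝ) else 0) * G n r x := by
      intro k
      rw [hf]
      simp only []
      by_cases hk : x ≤ p k
      · rw [Set.indicator_of_mem (Set.mem_Ioc.mpr ⟨hx0, hk⟩), if_pos hk, one_mul]
      · rw [Set.indicator_of_notMem (fun hm => hk (Set.mem_Ioc.mp hm).2), if_neg hk, zero_mul]
    simp_rw [this]
    rw [tsum_mul_right, ← nuR, ← nu0_eq_nuR hsum hx0]
  calc ∑' k, p k ^ (r + 1) * (1 - p k) ^ (n - r)
      = ∑' k, ∫ x, f k x ∂μ := by rw [tsum_congr stepA]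
    _ = ∫ x, (∑' k, f k x) ∂μ := stepB.symm
    _ = ∫ x in Set.Ioc (0:ℝ) 1, nu0 p x * G n r x := by
        rw [hμ]
        exact MeasureTheory.setIntegral_congr_fun measurableSet_Ioc stepC

end main

/-- Step 2: scaling substitution. -/
lemma integral_scale (n : ℕ) (hn : 0 < n) (f : ℝ → ℝ) :
    ∫ x in Set.Ioc (0:ℝ) 1, f x = (n : ℝ)⁻¹ * ∫ t in Set.Ioc (0:ℝ) (n:ℝ), f (t / n) := by
  have hn0 : (n : ℝ) ≠ 0 := by positivity
  have h := intervalIntegral.integral_comp_div (a := (0:ℝ)) (b := (n:ℝ)) (c := (n:ℝ)) f hn0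
  rw [zero_div, div_self hn0] at h
  have e1 : ∫ t in (0:ℝ)..(n:ℝ), f (t / n) = ∫ t in Set.Ioc (0:ℝ) (n:ℝ), f (t / n) :=
    intervalIntegral.integral_of_le (by positivity)
  have e2 : ∫ x in (0:ℝ)..(1:ℝ), f x = ∫ x in Set.Ioc (0:ℝ) 1, f x :=
    intervalIntegral.integral_of_le (by norm_num)
  rw [e1, e2, smul_eq_mul] at h
  rw [h]
  field_simp

section asymp

variable {p : ℕ → ℝ} (hpnn : ∀ k, 0 ≤ p k) (hp : HasSum p 1)
  {α : ℝ} (hα : α ∈ Set.Ioo (0:ℝ) 1) {ℓ : ℝ → ℝ} (hsv : SlowlyVarying ℓ)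
  (hν : Tendsto (fun ε : ℝ => nuR p ε / (ε ^ (-α) * ℓ (1 / ε)))
      (nhdsWithin 0 (Set.Ioi 0)) (nhds 1))

/-- abbreviation for the regularly varying comparison function -/
noncomputable def Vf (α : ℝ) (ℓ : ℝ → ℝ) (ε : ℝ) : ℝ := ε ^ (-α) * ℓ (1 / ε)


lemma exists_of_eventually {P : ℝ → Prop} (h : ∀ᶠ ε in nhdsWithin (0:ℝ) (Set.Ioi 0), P ε) :
    ∃ δ > (0:ℝ), ∀ ε, 0 < ε → ε ≤ δ → P ε := by
  rw [eventually_nhdsWithin_iff, Metric.eventually_nhds_iff] at h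
  obtain ⟨δ, hδ, h⟩ := h
  refine ⟨δ / 2, by linarith, fun ε h0 hle => h ?_ h0⟩
  rw [Real.dist_eq, sub_zero, abs_of_pos h0]
  linarith

lemma tendsto_one_div_nhdsGT :
    Tendsto (fun ε : ℝ => 1 / ε) (nhdsWithin (0:ℝ) (Set.Ioi 0)) atTop := by
  simpa [one_div] using tendsto_inv_nhdsGT_zero (𝕜 := ℝ)

include hα hsv in
lemma Vratio {c : ℝ} (hc : 0 < c) :
    Tendsto (fun ε => Vf α ℓ (c * ε) / Vf α ℓ ε) (nhdsWithin (0:ℝ) (Set.Ioi 0))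
      (nhds (c ^ (-α))) := by
  have h1 : Tendsto (fun ε : ℝ => ℓ (c⁻¹ * (1 / ε)) / ℓ (1 / ε))
      (nhdsWithin (0:ℝ) (Set.Ioi 0)) (nhds 1) :=
    (hsv c⁻¹ (inv_pos.mpr hc)).comp tendsto_one_div_nhdsGT
  have h2 := (tendsto_const_nhds (x := c ^ (-α))
      (f := nhdsWithin (0:ℝ) (Set.Ioi 0))).mul h1
  rw [mul_one] at h2
  apply h2.congr'
  filter_upwards [self_mem_nhdsWithin] with ε hε
  simp only [Set.mem_Ioi] at hε
  have hε0 : (0:ℝ) < ε := hε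
  rw [Vf, Vf, ← div_mul_div_comm]
  congr 1
  · rw [Real.mul_rpow hc.le hε0.le, mul_div_assoc,
      div_self (ne_of_gt (Real.rpow_pos_of_pos hε0 _)), mul_one]
  · congr 2
    rw [one_div, one_div, mul_inv]

include hp hν in
lemma hnu0 : Tendsto (fun ε : ℝ => nu0 p ε / Vf α ℓ ε)
    (nhdsWithin (0:ℝ) (Set.Ioi 0)) (nhds 1) := by
  apply hν.congr'
  filter_upwards [self_mem_nhdsWithin] with ε hε
  rw [Vf, nu0_eq_nuR ⟨1, hp⟩ hε]

include hp hα hsv hν in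
/-- sandwich: eventually `V > 0` and `ν/V ∈ (1/2, 3/2)`. -/
lemma eventually_sandwich :
    ∀ᶠ ε in nhdsWithin (0:ℝ) (Set.Ioi 0),
      0 < Vf α ℓ ε ∧ nu0 p ε ≤ 3/2 * Vf α ℓ ε ∧ 1/2 * Vf α ℓ ε ≤ nu0 p ε := by
  have h := hnu0 hp hν
  have h1 : ∀ᶠ ε in nhdsWithin (0:ℝ) (Set.Ioi 0),
      nu0 p ε / Vf α ℓ ε ∈ Set.Ioo (1/2 : ℝ) (3/2) :=
    h.eventually (Ioo_mem_nhds (by norm_num) (by norm_num))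
  filter_upwards [h1, self_mem_nhdsWithin] with ε hmem hε
  simp only [Set.mem_Ioo] at hmem
  obtain ⟨hlo, hhi⟩ := hmem
  have hnn : 0 ≤ nu0 p ε := nu0_nonneg p ε
  have hV : 0 < Vf α ℓ ε := by
    rcases lt_trichotomy (Vf α ℓ ε) 0 with hneg | hzero | hpos
    · exfalso
      have : nu0 p ε / Vf α ℓ ε ≤ 0 := div_nonpos_iff.mpr (Or.inl ⟨hnn, hneg.le⟩)
      linarith
    · exfalso; rw [hzero, div_zero] at hlo; linarith
    · exact hpos
  refine ⟨hV, ?_, ?_⟩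
  · have := (div_lt_iff₀ hV).mp hhi; linarith
  · have := (lt_div_iff₀ hV).mp hlo; linarith

include hp hα hsv hν in
/-- doubling estimate: eventually `ν(ε/2) ≤ 2^β ν(ε)` where `β = (1+α)/2`. -/
lemma eventually_doubling :
    ∀ᶠ ε in nhdsWithin (0:ℝ) (Set.Ioi 0),
      nu0 p (ε / 2) ≤ 2 ^ ((1+α)/2) * nu0 p ε := by
  have hα0 := hα.1
  have hα1 := hα.2
  have hm : Tendsto (fun ε : ℝ => ε / 2) (nhdsWithin (0:ℝ) (Set.Ioi 0))
      (nhdsWithin (0:ℝ) (Set.Ioi 0)) := by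
    rw [tendsto_nhdsWithin_iff]
    constructor
    · have : Tendsto (fun ε : ℝ => ε / 2) (nhds 0) (nhds (0 / 2)) :=
        (continuous_id.div_const 2).tendsto 0
      rw [zero_div] at this
      exact this.mono_left nhdsWithin_le_nhds
    · filter_upwards [self_mem_nhdsWithin] with ε hε
      simp only [Set.mem_Ioi] at hε ⊢
      linarith
  have h1 : Tendsto (fun ε : ℝ => nu0 p (ε / 2) / Vf α ℓ (ε / 2))
      (nhdsWithin (0:ℝ) (Set.Ioi 0)) (nhds 1) := (hnu0 hp hν).comp hm
  have h2 : Tendsto (fun ε : ℝ => Vf α ℓ (2⁻¹ * ε) / Vf α ℓ ε)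
      (nhdsWithin (0:ℝ) (Set.Ioi 0)) (nhds ((2⁻¹ : ℝ) ^ (-α))) :=
    Vratio hα hsv (by norm_num)
  have h3 : Tendsto (fun ε : ℝ => Vf α ℓ ε / nu0 p ε)
      (nhdsWithin (0:ℝ) (Set.Ioi 0)) (nhds 1) := by
    have := ((hnu0 hp hν).inv₀ one_ne_zero)
    rw [inv_one] at this
    apply this.congr
    intro ε
    rw [← one_div, one_div_div]
  have hprod := (h1.mul h2).mul h3
  rw [one_mul, mul_one] at hprod
  have hlim : (2⁻¹ : ℝ) ^ (-α) = 2 ^ α := by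
    rw [Real.inv_rpow (by norm_num : (0:ℝ) ≤ 2), Real.rpow_neg (by norm_num : (0:ℝ) ≤ 2),
      inv_inv]
  rw [hlim] at hprod
  have hKlt : (2:ℝ) ^ α < 2 ^ ((1+α)/2) :=
    Real.rpow_lt_rpow_left_iff (by norm_num : (1:ℝ) < 2) |>.mpr (by linarith)
  have hev := hprod.eventually (eventually_lt_nhds hKlt)
  filter_upwards [hev, eventually_sandwich hp hα hsv hν,
    hm.eventually (eventually_sandwich hp hα hsv hν), self_mem_nhdsWithin]
    with ε hlt hsand hsand2 hε
  simp only [Set.mem_Ioi] at hε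
  obtain ⟨hV, _, hlo⟩ := hsand
  obtain ⟨hV2, _, _⟩ := hsand2
  have hν_pos : 0 < nu0 p ε := lt_of_lt_of_le (by linarith) hlo
  have heq : nu0 p (ε / 2) / Vf α ℓ (ε / 2) * (Vf α ℓ (2⁻¹ * ε) / Vf α ℓ ε)
      * (Vf α ℓ ε / nu0 p ε) = nu0 p (ε / 2) / nu0 p ε := by
    rw [show (2⁻¹ : ℝ) * ε = ε / 2 by ring]
    field_simp
  rw [heq] at hlt
  calc nu0 p (ε / 2) = nu0 p (ε / 2) / nu0 p ε * nu0 p ε := by field_simp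
    _ ≤ 2 ^ ((1+α)/2) * nu0 p ε :=
        mul_le_mul_of_nonneg_right hlt.le hν_pos.le

include hp hα hsv hν in
/-- Potter-type bound from doubling + monotonicity. -/
lemma potter_bound :
    ∃ ε₁ > (0:ℝ), ∀ ε, 0 < ε → ε ≤ ε₁ → ∀ t : ℝ, 0 < t → t ≤ 1 →
      nu0 p (t * ε) ≤ 2 ^ ((1+α)/2) * t ^ (-((1+α)/2)) * nu0 p ε := by
  set β : ℝ := (1+α)/2 with hβ
  set K : ℝ := 2 ^ β with hK
  have hK1 : (1:ℝ) ≤ K := Real.one_le_rpow (by norm_num) (by have := hα.1; rw [hβ]; linarith)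
  have hK0 : (0:ℝ) ≤ K := by linarith
  obtain ⟨δ, hδ0, hδ⟩ := exists_of_eventually (eventually_doubling hp hα hsv hν)
  refine ⟨δ, hδ0, ?_⟩
  have hsummable : Summable p := ⟨1, hp⟩
  -- iterated doubling
  have iter : ∀ j : ℕ, ∀ ε, 0 < ε → ε ≤ δ → nu0 p (ε / 2 ^ j) ≤ K ^ j * nu0 p ε := by
    intro j
    induction j with
    | zero => intro ε h0 hle; simp
    | succ j ih =>
      intro ε h0 hle
      have h2 : nu0 p ((ε / 2) / 2 ^ j) ≤ K ^ j * nu0 p (ε / 2) :=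
        ih (ε / 2) (by linarith) (by linarith)
      have h3 : nu0 p (ε / 2) ≤ K * nu0 p ε := hδ ε h0 hle
      have heq : ε / 2 ^ (j + 1) = (ε / 2) / 2 ^ j := by
        rw [div_div]
        congr 1
        rw [pow_succ]
        ring
      rw [heq]
      calc nu0 p ((ε / 2) / 2 ^ j) ≤ K ^ j * nu0 p (ε / 2) := h2
        _ ≤ K ^ j * (K * nu0 p ε) :=
            mul_le_mul_of_nonneg_left h3 (pow_nonneg hK0 j)
        _ = K ^ (j + 1) * nu0 p ε := by rw [pow_succ]; ring
  intro ε hε0 hεδ t ht0 ht1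
  set j : ℕ := ⌊Real.logb 2 (1/t)⌋₊ with hj
  have h1t : (1:ℝ) ≤ 1 / t := by
    rw [le_div_iff₀ ht0]; linarith
  have hlog0 : 0 ≤ Real.logb 2 (1/t) := Real.logb_nonneg (by norm_num) h1t
  have hj_le : (j:ℝ) ≤ Real.logb 2 (1/t) := Nat.floor_le hlog0
  have hj_lt : Real.logb 2 (1/t) < (j:ℝ) + 1 := Nat.lt_floor_add_one _
  have hpow_gt : 1 / t < 2 ^ ((j:ℝ) + 1) :=
    (Real.logb_lt_iff_lt_rpow (by norm_num) (by positivity)).mp hj_lt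
  have hpow_gt' : 1 / t < (2:ℝ) ^ (j + 1 : ℕ) := by
    rwa [show ((j:ℝ) + 1) = ((j + 1 : ℕ) : ℝ) by push_cast; ring, Real.rpow_natCast] at hpow_gt
  -- ε / 2^(j+1) ≤ t * ε
  have hstep : ε / 2 ^ (j + 1 : ℕ) ≤ t * ε := by
    rw [div_le_iff₀ (by positivity)]
    have : 1 ≤ t * 2 ^ (j + 1 : ℕ) := by
      rw [div_lt_iff₀ ht0] at hpow_gt'
      nlinarith
    nlinarith
  have hmono : nu0 p (t * ε) ≤ nu0 p (ε / 2 ^ (j + 1 : ℕ)) :=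
    nu0_antitone hsummable (by positivity) hstep
  have hiter := iter (j + 1) ε hε0 hεδ
  -- K^(j+1) ≤ 2^β * t^(-β)
  have hβ0 : 0 < β := by have := hα.1; rw [hβ]; linarith
  have hKj : K ^ (j + 1 : ℕ) ≤ 2 ^ β * t ^ (-β) := by
    have e1 : K ^ (j + 1 : ℕ) = (2:ℝ) ^ (β * ((j:ℝ) + 1)) := by
      rw [hK, ← Real.rpow_natCast ((2:ℝ) ^ β) (j+1), ← Real.rpow_mul (by norm_num)]
      push_cast
      ring_nf
    have e2 : (2:ℝ) ^ (β * ((j:ℝ) + 1)) ≤ 2 ^ (β * (Real.logb 2 (1/t) + 1)) := by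
      apply Real.rpow_le_rpow_left_iff (by norm_num : (1:ℝ) < 2) |>.mpr
      have : (j:ℝ) + 1 ≤ Real.logb 2 (1/t) + 1 := by linarith
      nlinarith
    have e3 : (2:ℝ) ^ (β * (Real.logb 2 (1/t) + 1)) = 2 ^ β * t ^ (-β) := by
      have key : (2:ℝ) ^ (β * Real.logb 2 (1/t)) = t ^ (-β) := by
        rw [mul_comm, Real.rpow_mul (by norm_num : (0:ℝ) ≤ 2),
          Real.rpow_logb (by norm_num) (by norm_num) (by positivity), one_div,
          Real.inv_rpow ht0.le, ← Real.rpow_neg ht0.le]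
      rw [mul_add, mul_one, Real.rpow_add (by norm_num : (0:ℝ) < 2), key, mul_comm]
    calc K ^ (j + 1 : ℕ) = (2:ℝ) ^ (β * ((j:ℝ) + 1)) := e1
      _ ≤ (2:ℝ) ^ (β * (Real.logb 2 (1/t) + 1)) := e2
      _ = 2 ^ β * t ^ (-β) := e3
  calc nu0 p (t * ε) ≤ nu0 p (ε / 2 ^ (j + 1 : ℕ)) := hmono
    _ ≤ K ^ (j + 1 : ℕ) * nu0 p ε := hiter
    _ ≤ 2 ^ β * t ^ (-β) * nu0 p ε :=
        mul_le_mul_of_nonneg_right hKj (nu0_nonneg p ε)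

include hp hα hsv hν in
/-- pointwise limit of the normalized counting function along `t/n`. -/
lemma ratio_tendsto {t : ℝ} (ht : 0 < t) :
    Tendsto (fun n : ℕ => nu0 p (t / n) / ((n:ℝ) ^ α * ℓ n)) atTop
      (nhds (t ^ (-α))) := by
  have hseq : Tendsto (fun n : ℕ => t / (n:ℝ)) atTop (nhdsWithin (0:ℝ) (Set.Ioi 0)) := by
    rw [tendsto_nhdsWithin_iff]
    refine ⟨tendsto_const_div_atTop_nhds_zero_nat t, ?_⟩
    filter_upwards [eventually_ge_atTop 1] with n hn
    have : (0:ℝ) < n := by exact_mod_cast hn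
    exact Set.mem_Ioi.mpr (by positivity)
  have h1 : Tendsto (fun n : ℕ => nu0 p (t / n) / Vf α ℓ (t / n)) atTop (nhds 1) :=
    (hnu0 hp hν).comp hseq
  have h2 : Tendsto (fun n : ℕ => ℓ ((1/t) * n) / ℓ n) atTop (nhds 1) :=
    (hsv (1/t) (by positivity)).comp tendsto_natCast_atTop_atTop
  have h3 := h1.mul ((tendsto_const_nhds (x := t ^ (-α)) (f := atTop (α := ℕ))).mul h2)
  rw [one_mul, mul_one] at h3
  apply h3.congr'
  have hVpos := hseq.eventually (eventually_sandwich hp hα hsv hν)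
  filter_upwards [eventually_ge_atTop 1, hVpos] with n hn hsand
  have hn0 : (0:ℝ) < n := by exact_mod_cast hn
  obtain ⟨hV, _, _⟩ := hsand
  -- identify V (t/n)
  have hVeq : Vf α ℓ (t / n) = t ^ (-α) * (n:ℝ) ^ α * ℓ ((1/t) * n) := by
    rw [Vf, one_div_div]
    congr 1
    · rw [div_rpow ht.le hn0.le, Real.rpow_neg ht.le, Real.rpow_neg hn0.le,
        div_eq_mul_inv, inv_inv]
    · rw [div_eq_mul_inv, mul_comm, one_div]
  have hℓpos : 0 < ℓ ((1/t) * n) := by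
    rw [hVeq] at hV
    by_contra hle
    push_neg at hle
    have h4 : 0 < t ^ (-α) * (n:ℝ) ^ α := by positivity
    nlinarith
  have htα : (0:ℝ) < t ^ (-α) := Real.rpow_pos_of_pos ht _
  have hnα : (0:ℝ) < (n:ℝ) ^ α := Real.rpow_pos_of_pos hn0 _
  rw [hVeq]
  by_cases hln : ℓ (n:ℝ) = 0
  · simp [hln]
  · have key : ∀ x a b c d : ℝ, a ≠ 0 → b ≠ 0 → c ≠ 0 → d ≠ 0 →
        x / (b * d) = x / (a * b * c) * (a * (c / d)) := by
      intros x a b c d ha hb hc hd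
      field_simp
    exact (key _ _ _ _ _ htα.ne' hnα.ne' hℓpos.ne' hln).symm

include hp hα hsv hν in
/-- master domination bound. -/
lemma master_bound :
    ∃ N : ℕ, ∃ C : ℝ, 0 < C ∧ ∀ n : ℕ, N ≤ n → ∀ t : ℝ, 0 < t → t ≤ n →
      nu0 p (t / n) ≤ C * (t ^ (-((1+α)/2)) + 1) * ((n:ℝ) ^ α * ℓ n) := by
  set β : ℝ := (1+α)/2 with hβ
  obtain ⟨δ₀, hδ₀0, hδ₀⟩ := exists_of_eventually (eventually_sandwich hp hα hsv hν)
  obtain ⟨ε₁, hε₁0, hPot⟩ := potter_bound hp hα hsv hν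
  set δ : ℝ := min δ₀ ε₁ with hδdef
  have hδ0 : 0 < δ := lt_min hδ₀0 hε₁0
  refine ⟨⌈1/δ⌉₊ + 1, 3/2 * 2 ^ β, by positivity, ?_⟩
  intro n hN t ht0 htn
  have hn1 : 1 ≤ n := le_trans (by omega) hN
  have hn0 : (0:ℝ) < n := by exact_mod_cast hn1
  have hinv : 1 / (n:ℝ) ≤ δ := by
    rw [div_le_iff₀ hn0]
    have h1 : (1/δ : ℝ) ≤ (⌈1/δ⌉₊ : ℝ) := Nat.le_ceil _
    have h2 : ((⌈1/δ⌉₊ : ℕ) : ℝ) + 1 ≤ (n:ℝ) := by exact_mod_cast hN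
    calc (1:ℝ) = δ * (1/δ) := by field_simp
      _ ≤ δ * n := by
          apply mul_le_mul_of_nonneg_left _ hδ0.le
          linarith
  have hinv0 : (0:ℝ) < 1 / n := by positivity
  obtain ⟨hV1n, hnu_le, _⟩ := hδ₀ (1/n) hinv0 (le_trans hinv (min_le_left _ _))
  have hVeq : Vf α ℓ (1/(n:ℝ)) = (n:ℝ) ^ α * ℓ n := by
    rw [Vf, one_div_one_div]
    congr 1
    rw [one_div, Real.inv_rpow hn0.le, Real.rpow_neg hn0.le, inv_inv]
  rw [hVeq] at hV1n hnu_le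
  have hterm : (0:ℝ) < t ^ (-β) + 1 := by positivity
  rcases le_or_gt t 1 with hle | hgt
  · -- small t : Potter bound
    have := hPot (1/n) hinv0 (le_trans hinv (min_le_right _ _)) t ht0 hle
    have heq : t * (1/n) = t / n := by ring
    rw [heq] at this
    calc nu0 p (t / n) ≤ 2 ^ β * t ^ (-β) * nu0 p (1/n) := this
      _ ≤ 2 ^ β * t ^ (-β) * (3/2 * ((n:ℝ) ^ α * ℓ n)) := by
          apply mul_le_mul_of_nonneg_left hnu_le (by positivity)
      _ ≤ 3/2 * 2 ^ β * (t ^ (-β) + 1) * ((n:ℝ) ^ α * ℓ n) := by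
          have h2β : (0:ℝ) < 2 ^ β := by positivity
          have htβ : (0:ℝ) ≤ t ^ (-β) := (Real.rpow_pos_of_pos ht0 _).le
          nlinarith
  · -- large t : monotonicity
    have hmono : nu0 p (t / n) ≤ nu0 p (1/n) := by
      apply nu0_antitone ⟨1, hp⟩ hinv0
      gcongr
    calc nu0 p (t / n) ≤ nu0 p (1/n) := hmono
      _ ≤ 3/2 * ((n:ℝ) ^ α * ℓ n) := hnu_le
      _ ≤ 3/2 * 2 ^ β * (t ^ (-β) + 1) * ((n:ℝ) ^ α * ℓ n) := by
          have h2β : (1:ℝ) ≤ 2 ^ β :=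
            Real.one_le_rpow (by norm_num) (by have := hα.1; rw [hβ]; linarith)
          have htβ : (0:ℝ) ≤ t ^ (-β) := (Real.rpow_pos_of_pos ht0 _).le
          have hfac : (1:ℝ) ≤ 2 ^ β * (t ^ (-β) + 1) := by nlinarith
          have hmul := mul_le_mul_of_nonneg_right hfac hV1n.le
          rw [one_mul] at hmul
          nlinarith

include hp hα hsv hν in
lemma eventually_pos_denom :
    ∀ᶠ n : ℕ in atTop, 0 < (n:ℝ) ^ α * ℓ n := by
  obtain ⟨δ₀, hδ₀0, hδ₀⟩ := exists_of_eventually (eventually_sandwich hp hα hsv hν)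
  filter_upwards [eventually_ge_atTop (⌈1/δ₀⌉₊ + 1)] with n hN
  have hn1 : 1 ≤ n := le_trans (by omega) hN
  have hn0 : (0:ℝ) < n := by exact_mod_cast hn1
  have hinv : 1 / (n:ℝ) ≤ δ₀ := by
    rw [div_le_iff₀ hn0]
    have h1 : (1/δ₀ : ℝ) ≤ (⌈1/δ₀⌉₊ : ℝ) := Nat.le_ceil _
    have h2 : ((⌈1/δ₀⌉₊ : ℕ) : ℝ) + 1 ≤ (n:ℝ) := by exact_mod_cast hN
    calc (1:ℝ) = δ₀ * (1/δ₀) := by field_simp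
      _ ≤ δ₀ * n := by
          apply mul_le_mul_of_nonneg_left _ hδ₀0.le
          linarith
  obtain ⟨hV1n, _, _⟩ := hδ₀ (1/n) (by positivity) hinv
  have hVeq : Vf α ℓ (1/(n:ℝ)) = (n:ℝ) ^ α * ℓ n := by
    rw [Vf, one_div_one_div]
    congr 1
    rw [one_div, Real.inv_rpow hn0.le, Real.rpow_neg hn0.le, inv_inv]
  rwa [hVeq] at hV1n

end asymp

lemma choose_div_tendsto (r : ℕ) :
    Tendsto (fun n : ℕ => (n.choose r : ℝ) / (n:ℝ) ^ r) atTop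
      (nhds (1 / (r.factorial : ℝ))) := by
  have key : Tendsto (fun n : ℕ => ∏ i ∈ Finset.range r, ((1:ℝ) - i / n)) atTop (nhds 1) := by
    have h := tendsto_finset_prod (f := fun (i : ℕ) (n : ℕ) => (1:ℝ) - i / n)
      (x := atTop) (a := fun _ => (1:ℝ)) (Finset.range r)
      (fun i _ => by
        have : Tendsto (fun n : ℕ => (i:ℝ) / n) atTop (nhds 0) :=
          tendsto_const_div_atTop_nhds_zero_nat (i:ℝ)
        have := (tendsto_const_nhds (x := (1:ℝ))).sub this
        simpa using this)
    simpa using h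
  have key2 := key.div_const (r.factorial : ℝ)
  apply key2.congr'
  filter_upwards [eventually_ge_atTop (max r 1)] with n hn
  have hr : r ≤ n := le_trans (le_max_left _ _) hn
  have hn1 : 1 ≤ n := le_trans (le_max_right _ _) hn
  have hn0 : (0:ℝ) < n := by exact_mod_cast hn1
  have hdesc : (n.descFactorial r : ℝ) = ∏ i ∈ Finset.range r, ((n:ℝ) - i) := by
    rw [Nat.descFactorial_eq_prod_range]
    push_cast
    apply Finset.prod_congr rfl
    intro i hi
    have : i ≤ n := le_trans (le_of_lt (Finset.mem_range.mp hi)) hr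
    rw [Nat.cast_sub this]
  have hchoose : (n.choose r : ℝ) * (r.factorial : ℝ) = ∏ i ∈ Finset.range r, ((n:ℝ) - i) := by
    rw [← hdesc]
    rw [← Nat.cast_mul]
    congr 1
    rw [Nat.descFactorial_eq_factorial_mul_choose]
    ring
  have hfact : (r.factorial : ℝ) ≠ 0 := by exact_mod_cast r.factorial_pos.ne'
  have hprod : ∏ i ∈ Finset.range r, ((1:ℝ) - i / n)
      = (∏ i ∈ Finset.range r, ((n:ℝ) - i)) / (n:ℝ) ^ r := by
    rw [show ((n:ℝ) ^ r) = ∏ _i ∈ Finset.range r, (n:ℝ) by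
      rw [Finset.prod_const, Finset.card_range]]
    rw [← Finset.prod_div_distrib]
    apply Finset.prod_congr rfl
    intro i _
    field_simp
  have hpow : ((n:ℝ)) ^ r ≠ 0 := by positivity
  rw [hprod, ← hchoose]
  field_simp

lemma choose_le_pow (n r : ℕ) : (n.choose r : ℝ) ≤ (n:ℝ) ^ r := by
  have h1 : n.choose r ≤ n.descFactorial r := by
    rw [Nat.descFactorial_eq_factorial_mul_choose]
    exact Nat.le_mul_of_pos_left _ r.factorial_pos
  have h2 := Nat.descFactorial_le_pow n r
  have := h1.trans h2
  exact_mod_cast this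

lemma pow_tendsto_exp {t : ℝ} (ht : 0 < t) (r : ℕ) :
    Tendsto (fun n : ℕ => (1 - t / n) ^ (n - r - 1)) atTop (nhds (Real.exp (-t))) := by
  have h1 : Tendsto (fun n : ℕ => (1 + (-t) / n) ^ n) atTop (nhds (Real.exp (-t))) :=
    Real.tendsto_one_add_div_pow_exp (-t)
  have hb : Tendsto (fun n : ℕ => 1 - t / n) atTop (nhds 1) := by
    have : Tendsto (fun n : ℕ => t / n) atTop (nhds 0) :=
      tendsto_const_div_atTop_nhds_zero_nat t
    have := (tendsto_const_nhds (x := (1:ℝ))).sub this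
    simpa using this
  have h2 : Tendsto (fun n : ℕ => (1 - t / n) ^ (r + 1)) atTop (nhds 1) := by
    have := hb.pow (r + 1)
    simpa using this
  have h3 := h1.div h2 one_ne_zero
  rw [div_one] at h3
  apply h3.congr'
  filter_upwards [eventually_gt_atTop (r + 1), (tendsto_natCast_atTop_atTop (R := ℝ)).eventually_gt_atTop t] with n hn hnt
  have hn0 : (0:ℝ) < n := lt_trans ht hnt
  have hne : (1 : ℝ) - t / n ≠ 0 := by
    have : t / n < 1 := (div_lt_one hn0).mpr hnt
    linarith
  simp only [Pi.div_apply]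
  rw [div_eq_iff (pow_ne_zero _ hne), ← pow_add]
  have h' : n - r - 1 + (r + 1) = n := by omega
  rw [h', neg_div, ← sub_eq_add_neg]

lemma pow_le_exp {t : ℝ} (ht : 0 ≤ t) {n r : ℕ} (hn : 2 * (r + 1) ≤ n) (htn : t ≤ n) :
    (1 - t / n) ^ (n - r - 1) ≤ Real.exp (-(2⁻¹) * t) := by
  have hn0 : (0:ℝ) < n := by exact_mod_cast (by omega : 0 < n)
  have hbase0 : 0 ≤ 1 - t / n := by
    rw [sub_nonneg]
    exact (div_le_one hn0).mpr htn
  have hbase : 1 - t / n ≤ Real.exp (-(t / n)) := by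
    have := Real.add_one_le_exp (-(t / n)); linarith
  calc (1 - t / n) ^ (n - r - 1) ≤ (Real.exp (-(t / n))) ^ (n - r - 1) :=
        pow_le_pow_left₀ hbase0 hbase _
    _ = Real.exp (((n - r - 1 : ℕ) : ℝ) * (-(t / n))) := by rw [← Real.exp_nat_mul]
    _ ≤ Real.exp (-(2⁻¹) * t) := by
        apply Real.exp_le_exp.mpr
        have hcast : ((n - r - 1 : ℕ) : ℝ) = (n : ℝ) - (r + 1) := by
          have h' : r + 1 ≤ n := by omega
          have : n - r - 1 = n - (r + 1) := by omega
          rw [this, Nat.cast_sub h']; push_cast; ring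
        rw [hcast]
        have h1 : (n : ℝ) / 2 ≤ (n : ℝ) - (r + 1) := by
          have h2 : 2 * ((r : ℝ) + 1) ≤ n := by exact_mod_cast hn
          linarith
        have ht_n : 0 ≤ t / n := by positivity
        have key : (n : ℝ) / 2 * (t / n) ≤ ((n : ℝ) - (r + 1)) * (t / n) :=
          mul_le_mul_of_nonneg_right h1 ht_n
        have heq : (n : ℝ) / 2 * (t / n) = t / 2 := by field_simp
        rw [heq] at key
        linarith

lemma integral_lim_eq {α : ℝ} (hα : α ∈ Set.Ioo (0:ℝ) 1) (r : ℕ) :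
    ∫ t in Set.Ioi (0:ℝ), t ^ ((r:ℝ) - α) * Real.exp (-t) * ((r + 1 : ℝ) - t)
      = α * Real.Gamma (r + 1 - α) := by
  obtain ⟨hα0, hα1⟩ := hα
  have hr0 : (0:ℝ) ≤ r := Nat.cast_nonneg r
  set a : ℝ := (r:ℝ) + 1 - α with ha
  have ha0 : 0 < a := by rw [ha]; linarith
  have hb0 : 0 < a + 1 := by linarith
  have I1 := Real.GammaIntegral_convergent ha0
  have I2 := Real.GammaIntegral_convergent hb0
  have hcongr : Set.EqOn (fun t : ℝ => t ^ ((r:ℝ) - α) * Real.exp (-t) * ((r + 1 : ℝ) - t))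
      (fun t : ℝ => (r + 1 : ℝ) * (Real.exp (-t) * t ^ (a - 1)) - Real.exp (-t) * t ^ (a + 1 - 1))
      (Set.Ioi 0) := by
    intro t ht
    simp only [Set.mem_Ioi] at ht
    have e1 : t ^ ((r:ℝ) - α) = t ^ (a - 1) := by
      congr 1
      rw [ha]; ring
    have e2 : t ^ (a + 1 - 1) = t ^ (a - 1) * t := by
      rw [show a + 1 - 1 = (a - 1) + 1 by ring, Real.rpow_add ht, Real.rpow_one]
    simp only []
    rw [e1, e2]
    ring
  rw [MeasureTheory.setIntegral_congr_fun measurableSet_Ioi hcongr]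
  rw [MeasureTheory.integral_sub (I1.const_mul _) I2]
  rw [MeasureTheory.integral_const_mul]
  rw [← Real.Gamma_eq_integral ha0, ← Real.Gamma_eq_integral hb0]
  rw [Real.Gamma_add_one (ne_of_gt ha0)]
  rw [ha]
  ring

lemma integrable_rpow_exp {s : ℝ} (hs : -1 < s) :
    MeasureTheory.IntegrableOn (fun t : ℝ => t ^ s * Real.exp (-(2⁻¹) * t)) (Set.Ioi 0) := by
  have := integrableOn_rpow_mul_exp_neg_mul_rpow hs (by norm_num : (0:ℝ) < 1) (by norm_num : (0:ℝ) < 2⁻¹)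
  simpa [Real.rpow_one] using this

end KarlinAux

set_option maxHeartbeats 1000000 in
/-- Karlin's asymptotic, Proposition A.1 for α ∈ (0,1): if the counting
function of `P = (p_k)` satisfies `ν(ε) ∼ ε^{−α}ℓ(1/ε)` as `ε → 0` with `α ∈ (0,1)` and
`ℓ` slowly varying, then for all `r ≥ 0`,
`binom(n,r) Σ_k p_k^{r+1} (1 − p_k)^{n−r} / (n^{α−1}ℓ(n)) → αΓ(r+1−α)/r!`. -/
theorem karlin_RV_asymptotics (p : ℕ → ℝ) (hpnn : ∀ k, 0 ≤ p k) (hp : HasSum p 1)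
    (α : ℝ) (hα : α ∈ Set.Ioo (0 : ℝ) 1)
    (ℓ : ℝ → ℝ) (hsv : SlowlyVarying ℓ)
    (hν : Tendsto (fun ε : ℝ => nuR p ε / (ε ^ (-α) * ℓ (1 / ε)))
      (nhdsWithin 0 (Set.Ioi 0)) (nhds 1))
    (r : ℕ) :
    Tendsto (fun n : ℕ =>
        ((n.choose r : ℝ) * ∑' k, p k ^ (r + 1) * (1 - p k) ^ (n - r)) /
          ((n : ℝ) ^ (α - 1) * ℓ n))
      atTop (nhds (α * Real.Gamma (r + 1 - α) / (r.factorial : ℝ))) := by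
  classical
  open KarlinAux MeasureTheory Set Real in
  set β : ℝ := (1 + α) / 2 with hβdef
  have hα0 : 0 < α := hα.1
  have hα1 : α < 1 := hα.2
  have hβ0 : 0 < β := by rw [hβdef]; linarith
  have hβ1 : β < 1 := by rw [hβdef]; linarith
  obtain ⟨N₁, C, hC0, hmaster⟩ := master_bound hp hα hsv hν
  have hposD := eventually_pos_denom hp hα hsv hν
  -- the DCT family
  set Fn : ℕ → ℝ → ℝ := fun n t => (Set.Ioc (0:ℝ) (n:ℝ)).indicator
    (fun t => (n.choose r : ℝ) * (nu0 p (t / n) * G n r (t / n)) / ((n:ℝ) ^ α * ℓ n)) t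
    with hFn
  set E : ℝ → ℝ := fun t => Real.exp (-(2⁻¹) * t) with hE
  set flim : ℝ → ℝ := fun t => (Set.Ioi (0:ℝ)).indicator
    (fun t => 1 / (r.factorial : ℝ) * (t ^ ((r:ℝ) - α) * Real.exp (-t) * ((r + 1 : ℝ) - t))) t
    with hflim
  set bound : ℝ → ℝ := fun t => (Set.Ioi (0:ℝ)).indicator
    (fun t => C * (r + 3 : ℝ) * (t ^ ((r:ℝ) - β) * E t + t ^ ((r:ℝ) + 1 - β) * E t
      + t ^ ((r:ℝ)) * E t + t ^ ((r:ℝ) + 1) * E t)) t with hbound_def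
  have hEnn : ∀ t : ℝ, 0 ≤ E t := fun t => (Real.exp_pos _).le
  have hbound_nonneg : ∀ t, 0 ≤ bound t := by
    intro t
    simp only [hbound_def]
    by_cases ht : t ∈ Set.Ioi (0:ℝ)
    · rw [Set.indicator_of_mem ht]
      have ht0 : (0:ℝ) < t := ht
      have e0 := hEnn t
      positivity
    · rw [Set.indicator_of_notMem ht]
  -- measurability of each Fn
  have hF_meas : ∀ n : ℕ, AEStronglyMeasurable (Fn n) volume := by
    intro n
    apply (Measurable.indicator _ measurableSet_Ioc).aestronglyMeasurable
    apply Measurable.div_const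
    apply Measurable.mul measurable_const
    exact ((measurable_nu0 p).comp (measurable_id.div_const _)).mul
      (((continuous_G n r).measurable).comp (measurable_id.div_const _))
  -- domination
  have h_bound : ∀ᶠ n : ℕ in atTop, ∀ᵐ t : ℝ, ‖Fn n t‖ ≤ bound t := by
    filter_upwards [eventually_ge_atTop N₁, eventually_ge_atTop (2 * (r + 1)), hposD]
      with n hnN hn2r hD
    apply Filter.Eventually.of_forall
    intro t
    by_cases hmem : t ∈ Set.Ioc (0:ℝ) (n:ℝ)
    swap
    · simp only [hFn]
      simp only [Set.indicator_of_notMem hmem]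
      rw [norm_zero]
      exact hbound_nonneg t
    obtain ⟨ht0, htn⟩ := hmem
    have hn1 : 1 ≤ n := by omega
    have hn0 : (0:ℝ) < n := by exact_mod_cast hn1
    have htn' : t / n ≤ 1 := (div_le_one hn0).mpr htn
    have htdiv0 : 0 ≤ t / n := by positivity
    simp only [hFn]
    rw [Set.indicator_of_mem (Set.mem_Ioc.mpr ⟨ht0, htn⟩)]
    -- bound |G|
    have hGb : |G n r (t / n)| ≤ (t / n) ^ r * (E t * ((r + 1 : ℝ) + 2 * t)) := by
      rw [G, abs_mul, abs_mul]
      have b1 : |(t / n) ^ r| = (t / n) ^ r := abs_of_nonneg (pow_nonneg htdiv0 r)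
      have b2 : |(1 - t / n) ^ (n - r - 1)| ≤ E t := by
        rw [abs_of_nonneg (pow_nonneg (by linarith [htn']) _)]
        exact pow_le_exp ht0.le hn2r htn
      have b3 : |(r + 1 : ℝ) - (n + 1) * (t / n)| ≤ (r + 1 : ℝ) + 2 * t := by
        have hx0 : 0 ≤ ((n:ℝ) + 1) * (t / n) := by positivity
        have hx2 : ((n:ℝ) + 1) * (t / n) ≤ 2 * t := by
          rw [mul_div_assoc']
          rw [div_le_iff₀ hn0]
          have hn1' : (1:ℝ) ≤ n := by exact_mod_cast hn1
          nlinarith [ht0.le, hn1']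
        rw [abs_le]
        constructor <;> nlinarith
      calc |(t / n) ^ r| * |(1 - t / n) ^ (n - r - 1)| * |(r + 1 : ℝ) - (n + 1) * (t / n)|
          ≤ (t / n) ^ r * E t * ((r + 1 : ℝ) + 2 * t) := by
            apply mul_le_mul _ b3 (abs_nonneg _) (by positivity)
            rw [b1]
            exact mul_le_mul_of_nonneg_left b2 (pow_nonneg htdiv0 r)
        _ = (t / n) ^ r * (E t * ((r + 1 : ℝ) + 2 * t)) := by ring
    -- master bound on nu0
    have hnu := hmaster n hnN t ht0 htn
    rw [show -((1+α)/2) = -β from by rw [hβdef]] at hnu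
    have hnu0nn := nu0_nonneg p (t / n)
    have hDpos := hD
    -- assemble
    have habs : ‖(n.choose r : ℝ) * (nu0 p (t / n) * G n r (t / n)) / ((n:ℝ) ^ α * ℓ n)‖
        ≤ (n:ℝ) ^ r * (nu0 p (t / n) * |G n r (t / n)|) / ((n:ℝ) ^ α * ℓ n) := by
      rw [Real.norm_eq_abs, abs_div, abs_of_pos hDpos, abs_mul, abs_mul,
        abs_of_nonneg (show (0:ℝ) ≤ (n.choose r : ℝ) from Nat.cast_nonneg _),
        abs_of_nonneg hnu0nn]
      gcongr
      exact choose_le_pow n r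
    have hstep2 : (n:ℝ) ^ r * (nu0 p (t / n) * |G n r (t / n)|) / ((n:ℝ) ^ α * ℓ n)
        ≤ (n:ℝ) ^ r * ((C * (t ^ (-β) + 1) * ((n:ℝ) ^ α * ℓ n))
            * ((t / n) ^ r * (E t * ((r + 1 : ℝ) + 2 * t)))) / ((n:ℝ) ^ α * ℓ n) := by
      gcongr
      all_goals first
        | exact hnu
        | exact hGb
        | exact abs_nonneg _
        | positivity
    have hsimp : (n:ℝ) ^ r * ((C * (t ^ (-β) + 1) * ((n:ℝ) ^ α * ℓ n))
            * ((t / n) ^ r * (E t * ((r + 1 : ℝ) + 2 * t)))) / ((n:ℝ) ^ α * ℓ n)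
        = C * (t ^ (-β) + 1) * (t ^ r * (E t * ((r + 1 : ℝ) + 2 * t))) := by
      have hℓ0 : ℓ (n:ℝ) ≠ 0 := fun h0 => by rw [h0, mul_zero] at hDpos; exact lt_irrefl 0 hDpos
      rw [div_pow]
      field_simp
    have hfinal : C * (t ^ (-β) + 1) * (t ^ r * (E t * ((r + 1 : ℝ) + 2 * t))) ≤ bound t := by
      simp only [hbound_def]
      rw [Set.indicator_of_mem (Set.mem_Ioi.mpr ht0)]
      have e1 : t ^ ((r:ℝ) - β) = t ^ r * t ^ (-β) := by
        rw [show (r:ℝ) - β = (r:ℝ) + (-β) by ring, Real.rpow_add ht0, Real.rpow_natCast]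
      have e2 : t ^ ((r:ℝ) + 1 - β) = t ^ r * t * t ^ (-β) := by
        rw [show (r:ℝ) + 1 - β = (r:ℝ) + 1 + (-β) by ring, Real.rpow_add ht0,
          Real.rpow_add ht0, Real.rpow_one, Real.rpow_natCast]
      have e3 : t ^ ((r:ℝ)) = t ^ r := Real.rpow_natCast t r
      have e4 : t ^ ((r:ℝ) + 1) = t ^ r * t := by
        rw [Real.rpow_add ht0, Real.rpow_one, Real.rpow_natCast]
      rw [e1, e2, e3, e4]
      have hx : (0:ℝ) ≤ t ^ (-β) := (Real.rpow_pos_of_pos ht0 _).le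
      have hT : (0:ℝ) ≤ t ^ r := pow_nonneg ht0.le r
      have hEt := hEnn t
      have hinner : (t ^ (-β) + 1) * (t ^ r * (E t * ((r + 1 : ℝ) + 2 * t)))
          ≤ (r + 3 : ℝ) * (t ^ r * t ^ (-β) * E t + t ^ r * t * t ^ (-β) * E t
            + t ^ r * E t + t ^ r * t * E t) := by
        have m1 : (0:ℝ) ≤ t ^ r * t ^ (-β) * E t := by positivity
        have m2 : (0:ℝ) ≤ t ^ r * t * t ^ (-β) * E t := by positivity
        have m3 : (0:ℝ) ≤ t ^ r * E t := by positivity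
        have m4 : (0:ℝ) ≤ t ^ r * t * E t := by positivity
        nlinarith [m1, m2, m3, m4]
      calc C * (t ^ (-β) + 1) * (t ^ r * (E t * ((r + 1 : ℝ) + 2 * t)))
          = C * ((t ^ (-β) + 1) * (t ^ r * (E t * ((r + 1 : ℝ) + 2 * t)))) := by ring
        _ ≤ C * ((r + 3 : ℝ) * (t ^ r * t ^ (-β) * E t + t ^ r * t * t ^ (-β) * E t
            + t ^ r * E t + t ^ r * t * E t)) := mul_le_mul_of_nonneg_left hinner hC0.le
        _ = C * (r + 3 : ℝ) * (t ^ r * t ^ (-β) * E t + t ^ r * t * t ^ (-β) * E t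
            + t ^ r * E t + t ^ r * t * E t) := by ring
    calc ‖(n.choose r : ℝ) * (nu0 p (t / n) * G n r (t / n)) / ((n:ℝ) ^ α * ℓ n)‖
        ≤ (n:ℝ) ^ r * (nu0 p (t / n) * |G n r (t / n)|) / ((n:ℝ) ^ α * ℓ n) := habs
      _ ≤ (n:ℝ) ^ r * ((C * (t ^ (-β) + 1) * ((n:ℝ) ^ α * ℓ n))
            * ((t / n) ^ r * (E t * ((r + 1 : ℝ) + 2 * t)))) / ((n:ℝ) ^ α * ℓ n) := hstep2
      _ = C * (t ^ (-β) + 1) * (t ^ r * (E t * ((r + 1 : ℝ) + 2 * t))) := hsimp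
      _ ≤ bound t := hfinal
  -- integrability of the bound
  have hbound_int : Integrable bound volume := by
    rw [hbound_def, MeasureTheory.integrable_indicator_iff measurableSet_Ioi]
    have i1 := integrable_rpow_exp (show (-1:ℝ) < (r:ℝ) - β by
      have : (0:ℝ) ≤ r := Nat.cast_nonneg r; linarith)
    have i2 := integrable_rpow_exp (show (-1:ℝ) < (r:ℝ) + 1 - β by
      have : (0:ℝ) ≤ r := Nat.cast_nonneg r; linarith)
    have i3 := integrable_rpow_exp (show (-1:ℝ) < (r:ℝ) by
      have : (0:ℝ) ≤ r := Nat.cast_nonneg r; linarith)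
    have i4 := integrable_rpow_exp (show (-1:ℝ) < (r:ℝ) + 1 by
      have : (0:ℝ) ≤ r := Nat.cast_nonneg r; linarith)
    have hsum := ((i1.add i2).add i3).add i4
    have hmul := hsum.const_mul (C * (r + 3 : ℝ))
    exact MeasureTheory.IntegrableOn.congr_fun hmul
      (fun t _ => by simp only [hE, Pi.add_apply]) measurableSet_Ioi
  -- pointwise limit
  have h_lim : ∀ᵐ t : ℝ, Tendsto (fun n : ℕ => Fn n t) atTop (nhds (flim t)) := by
    apply Filter.Eventually.of_forall
    intro t
    rcases le_or_gt t 0 with ht | ht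
    · have hzero : ∀ n : ℕ, Fn n t = 0 := by
        intro n
        simp only [hFn]
        exact Set.indicator_of_notMem (fun hmem => absurd hmem.1 (not_lt.mpr ht)) _
      have hflim0 : flim t = 0 := by
        simp only [hflim]
        exact Set.indicator_of_notMem (fun hmem => absurd hmem (not_lt.mpr ht)) _
      rw [hflim0]
      simp only [hzero]
      exact tendsto_const_nhds
    · -- t > 0
      have L1 := choose_div_tendsto r
      have L2 := ratio_tendsto hp hα hsv hν ht
      have L3 := pow_tendsto_exp ht r
      have L4 : Tendsto (fun n : ℕ => (r + 1 : ℝ) - ((n:ℝ) + 1) * (t / n)) atTop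
          (nhds ((r + 1 : ℝ) - t)) := by
        have base : Tendsto (fun n : ℕ => (r + 1 : ℝ) - (t + t / n)) atTop
            (nhds ((r + 1 : ℝ) - (t + 0))) :=
          tendsto_const_nhds.sub (tendsto_const_nhds.add
            (tendsto_const_div_atTop_nhds_zero_nat t))
        rw [add_zero] at base
        apply base.congr'
        filter_upwards [eventually_ge_atTop 1] with n hn
        have hn0 : (0:ℝ) < n := by exact_mod_cast hn
        field_simp
      have L := (L1.mul L2).mul ((tendsto_const_nhds (x := (t:ℝ) ^ r)).mul (L3.mul L4))
      have hval : flim t = 1 / (r.factorial : ℝ) * t ^ (-α)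
          * (t ^ r * (Real.exp (-t) * ((r + 1 : ℝ) - t))) := by
        simp only [hflim]
        rw [Set.indicator_of_mem (Set.mem_Ioi.mpr ht)]
        have : t ^ ((r:ℝ) - α) = t ^ r * t ^ (-α) := by
          rw [show (r:ℝ) - α = (r:ℝ) + (-α) by ring, Real.rpow_add ht, Real.rpow_natCast]
        rw [this]
        ring
      rw [hval]
      apply L.congr'
      filter_upwards [eventually_ge_atTop (r + 1),
        (tendsto_natCast_atTop_atTop (R := ℝ)).eventually_gt_atTop t, hposD]
        with n hnr hnt hD
      have hn0 : (0:ℝ) < n := lt_trans ht hnt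
      simp only [hFn]
      simp only [Set.indicator_of_mem (Set.mem_Ioc.mpr ⟨ht, hnt.le⟩)]
      rw [G]
      have hnr0 : ((n:ℝ)) ^ r ≠ 0 := by positivity
      have hℓ0 : ℓ (n:ℝ) ≠ 0 := fun h0 => by rw [h0, mul_zero] at hD; exact lt_irrefl 0 hD
      rw [div_pow]
      field_simp
  -- apply dominated convergence
  have hDCT := MeasureTheory.tendsto_integral_filter_of_dominated_convergence
    (μ := volume) (F := Fn) (f := flim) bound
    (Filter.Eventually.of_forall hF_meas) h_bound hbound_int h_lim
  -- value of the limit integral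
  have hlimval : ∫ t, flim t = α * Real.Gamma (r + 1 - α) / (r.factorial : ℝ) := by
    simp only [hflim]
    rw [MeasureTheory.integral_indicator measurableSet_Ioi]
    rw [MeasureTheory.integral_const_mul]
    rw [integral_lim_eq hα r]
    ring
  rw [hlimval] at hDCT
  -- identify our sequence with the integrals, eventually
  apply hDCT.congr'
  filter_upwards [eventually_ge_atTop (r + 1), eventually_ge_atTop 1, hposD]
    with n hnr hn1 hD
  have hn0 : (0:ℝ) < n := by exact_mod_cast hn1
  -- chain of identities
  have step1 := sum_eq_integral hpnn hp n r hnr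
  have step2 := integral_scale n hn1 (fun x => nu0 p x * G n r x)
  have hIoc : ∫ t, Fn n t
      = ∫ t in Set.Ioc (0:ℝ) (n:ℝ),
          (n.choose r : ℝ) * (nu0 p (t / n) * G n r (t / n)) / ((n:ℝ) ^ α * ℓ n) := by
    simp only [hFn]
    exact MeasureTheory.integral_indicator measurableSet_Ioc
  have hconst : ∫ t in Set.Ioc (0:ℝ) (n:ℝ),
        (n.choose r : ℝ) * (nu0 p (t / n) * G n r (t / n)) / ((n:ℝ) ^ α * ℓ n)
      = ((n.choose r : ℝ) / ((n:ℝ) ^ α * ℓ n))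
        * ∫ t in Set.Ioc (0:ℝ) (n:ℝ), nu0 p (t / n) * G n r (t / n) := by
    rw [← MeasureTheory.integral_const_mul]
    congr 1
    funext t
    ring
  have hrpow : (n:ℝ) ^ (α - 1) = (n:ℝ) ^ α / n := by
    rw [Real.rpow_sub hn0, Real.rpow_one]
  -- put it together
  rw [hIoc, hconst]
  have hint_eq : ∫ t in Set.Ioc (0:ℝ) (n:ℝ), nu0 p (t / n) * G n r (t / n)
      = (n:ℝ) * ∑' k, p k ^ (r + 1) * (1 - p k) ^ (n - r) := by
    rw [step1, step2]
    field_simp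
  rw [hint_eq, hrpow]
  have hℓn : ℓ (n:ℝ) ≠ 0 := by
    intro h0
    rw [h0, mul_zero] at hD
    exact lt_irrefl 0 hD
  field_simp
end
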